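/- arXiv:1204.6522 — 3 statements merged into one kernel-verified Lean document; each statement's English description precedes it below -/
import Mathlib

section
/- The R-transform linearizes: writing R_μ(z) = Σ_{n≥1} kₙ(μ)zⁿ for the free cumulant series of a distribution μ, the relation between moments and free cumulants is equivalent to the functional equation G(G⁻¹(z)) = z where G(z) = Σ_{n≥0} mₙ z^{−n−1} is the Cauchy transform and G⁻¹(z) = 1/z + Σ_{n≥0} k_{n+1} zⁿ. Equivalently, in formal power series terms: M(z) = C(z·(1+M(z))) where M(z) = Σ_{n≥1} mₙzⁿ and C(z) = Σ_{n≥1} kₙzⁿ. -/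
noncomputable def NCPartitions (n : ℕ) : Finset (Finset (Finset (Fin n))) :=
  @Finset.filter _
    (fun P =>
      (∀ B ∈ P, B.Nonempty) ∧
      (∀ x : Fin n, ∃! B, B ∈ P ∧ x ∈ B) ∧
      ¬∃ p₁ q₁ p₂ q₂ : Fin n, p₁ < q₁ ∧ q₁ < p₂ ∧ p₂ < q₂ ∧
        (∃ B ∈ P, p₁ ∈ B ∧ p₂ ∈ B) ∧ (∃ B ∈ P, q₁ ∈ B ∧ q₂ ∈ B) ∧
        ¬∃ B ∈ P, q₁ ∈ B ∧ p₂ ∈ B)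
    (Classical.decPred _) Finset.univ

noncomputable def pscomp (f g : PowerSeries ℂ) : PowerSeries ℂ :=
  PowerSeries.mk fun n => ∑ k ∈ Finset.range (n + 1),
    PowerSeries.coeff k f * PowerSeries.coeff n (g ^ k)

namespace NCR
open Finset PowerSeries

def IsNC (n : ℕ) (P : Finset (Finset ℕ)) : Prop :=
  (∀ B ∈ P, B.Nonempty ∧ B ⊆ Finset.range n) ∧
  (∀ x < n, ∃! B, B ∈ P ∧ x ∈ B) ∧
  ¬∃ p₁ q₁ p₂ q₂ : ℕ, p₁ < q₁ ∧ q₁ < p₂ ∧ p₂ < q₂ ∧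
    (∃ B ∈ P, p₁ ∈ B ∧ p₂ ∈ B) ∧ (∃ B ∈ P, q₁ ∈ B ∧ q₂ ∈ B) ∧
    ¬∃ B ∈ P, q₁ ∈ B ∧ p₂ ∈ B

noncomputable def NCN (n : ℕ) : Finset (Finset (Finset ℕ)) :=
  @Finset.filter _ (fun P => IsNC n P) (Classical.decPred _)
    ((Finset.range n).powerset.powerset)

lemma mem_NCN {n : ℕ} {P : Finset (Finset ℕ)} : P ∈ NCN n ↔ IsNC n P := by
  unfold NCN
  simp only [Finset.mem_filter]
  constructor
  · exact fun h => h.2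
  · intro h
    refine ⟨?_, h⟩
    rw [Finset.mem_powerset]
    intro B hB
    rw [Finset.mem_powerset]
    exact (h.1 B hB).2

lemma NCN_zero : NCN 0 = {∅} := by
  ext P
  rw [mem_NCN, Finset.mem_singleton]
  constructor
  · intro h
    rw [Finset.eq_empty_iff_forall_notMem]
    intro B hB
    have := h.1 B hB
    rcases this.1 with ⟨x, hx⟩
    have := this.2 hx
    simp at this
  · rintro rfl
    refine ⟨by simp, by omega, ?_⟩
    rintro ⟨p₁, q₁, p₂, q₂, _, _, _, ⟨B, hB, _⟩, _⟩
    simp at hB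

noncomputable def aN (c : ℕ → ℂ) (n : ℕ) : ℂ := ∑ P ∈ NCN n, ∏ B ∈ P, c B.card

noncomputable def mw (c : ℕ → ℂ) (s : ℕ) (P : Finset (Finset ℕ)) : ℂ :=
  ∏ B ∈ P, if 0 ∈ B then c (s + B.card) else c B.card

noncomputable def h (c : ℕ → ℂ) (s n : ℕ) : ℂ :=
  if n = 0 then c s else ∑ P ∈ NCN n, mw c s P

lemma aN_zero (c : ℕ → ℂ) : aN c 0 = 1 := by
  simp [aN, NCN_zero]

lemma h_eq_aN (c : ℕ → ℂ) {n : ℕ} (hn : 1 ≤ n) : h c 0 n = aN c n := by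
  unfold h aN
  rw [if_neg (by omega)]
  refine Finset.sum_congr rfl fun P _ => ?_
  unfold mw
  refine Finset.prod_congr rfl fun B _ => ?_
  split <;> simp

lemma IsNC_zero {R : Finset (Finset ℕ)} (hR : IsNC 0 R) : R = ∅ := by
  rw [Finset.eq_empty_iff_forall_notMem]
  intro B hB
  obtain ⟨⟨x, hx⟩, hsub⟩ := hR.1 B hB
  simpa using hsub hx

/-- the block containing 0 (or `∅` if none) -/
noncomputable def zb (R : Finset (Finset ℕ)) : Finset ℕ :=
  (R.filter (fun B => 0 ∈ B)).sup id

lemma zb_spec {m : ℕ} {R : Finset (Finset ℕ)} (hR : IsNC m R)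
    {C : Finset ℕ} (hC : C ∈ R) (h0 : 0 ∈ C) :
    zb R = C ∧ zb R ∈ R ∧ 0 ∈ zb R ∧ ∀ B ∈ R, 0 ∈ B → B = zb R := by
  have hm : 0 < m := by
    have := (hR.1 C hC).2 h0
    simpa using this
  obtain ⟨B, ⟨hB, hB0⟩, huniq⟩ := hR.2.1 0 hm
  have hfil : R.filter (fun B => 0 ∈ B) = {B} := by
    ext D
    rw [Finset.mem_filter, Finset.mem_singleton]
    constructor
    · rintro ⟨hD, hD0⟩; exact huniq D ⟨hD, hD0⟩
    · rintro rfl; exact ⟨hB, hB0⟩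
  have hzb : zb R = B := by rw [zb, hfil, Finset.sup_singleton]; rfl
  have hCB : C = B := huniq C ⟨hC, h0⟩
  subst hCB
  rw [hzb]
  exact ⟨rfl, hC, h0, fun D hD hD0 => huniq D ⟨hD, hD0⟩⟩

lemma zb_empty {R : Finset (Finset ℕ)} (h : ∀ B ∈ R, 0 ∉ B) : zb R = ∅ := by
  have : R.filter (fun B => 0 ∈ B) = ∅ := by
    rw [Finset.filter_eq_empty_iff]; exact h
  rw [zb, this]; rfl

/-- decode -/
noncomputable def dec (j : ℕ) (Q R : Finset (Finset ℕ)) : Finset (Finset ℕ) :=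
  Q.image (fun B => B.image (· + 1)) ∪
  (R.filter (fun B => 0 ∉ B)).image (fun B => B.image (· + (j+1))) ∪
  {insert 0 ((zb R).image (· + (j+1)))}

/-- encode -/
noncomputable def jO (n : ℕ) (P : Finset (Finset ℕ)) : ℕ :=
  if h : ((zb P).erase 0).Nonempty then ((zb P).erase 0).min' h - 1 else n

noncomputable def Qo (n : ℕ) (P : Finset (Finset ℕ)) : Finset (Finset ℕ) :=
  (P.filter (fun B => ∀ x ∈ B, 1 ≤ x ∧ x ≤ jO n P)).image (fun B => B.image (· - 1))

noncomputable def Ro (n : ℕ) (P : Finset (Finset ℕ)) : Finset (Finset ℕ) :=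
  ((P.filter (fun B => ∀ x ∈ B, x = 0 ∨ jO n P + 1 ≤ x)).image
    (fun B => (B.erase 0).image (· - (jO n P + 1)))).erase ∅

section Decode

variable {n j : ℕ} {Q R : Finset (Finset ℕ)}
variable (hjn : j ≤ n) (hQ : IsNC j Q) (hR : IsNC (n-j) R)

/-- bounds for blocks of the three parts -/
lemma memIQ (hQ : IsNC j Q) {B : Finset ℕ}
    (hB : B ∈ Q.image (fun B => B.image (· + 1))) :
    B.Nonempty ∧ ∀ x ∈ B, 1 ≤ x ∧ x ≤ j := by
  rw [Finset.mem_image] at hB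
  obtain ⟨C, hC, rfl⟩ := hB
  refine ⟨(hQ.1 C hC).1.image _, ?_⟩
  intro x hx
  rw [Finset.mem_image] at hx
  obtain ⟨y, hy, rfl⟩ := hx
  have := Finset.mem_range.mp ((hQ.1 C hC).2 hy)
  omega

lemma memIR (hjn : j ≤ n) (hR : IsNC (n-j) R) {B : Finset ℕ}
    (hB : B ∈ (R.filter (fun B => 0 ∉ B)).image (fun B => B.image (· + (j+1)))) :
    B.Nonempty ∧ ∀ x ∈ B, j+2 ≤ x ∧ x ≤ n := by
  rw [Finset.mem_image] at hB
  obtain ⟨C, hC, rfl⟩ := hB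
  rw [Finset.mem_filter] at hC
  refine ⟨(hR.1 C hC.1).1.image _, ?_⟩
  intro x hx
  rw [Finset.mem_image] at hx
  obtain ⟨y, hy, rfl⟩ := hx
  have h1 := Finset.mem_range.mp ((hR.1 C hC.1).2 hy)
  have h2 : y ≠ 0 := fun h => hC.2 (h ▸ hy)
  omega

lemma memZ (hjn : j ≤ n) (hR : IsNC (n-j) R) {x : ℕ}
    (hx : x ∈ insert 0 ((zb R).image (· + (j+1)))) :
    x = 0 ∨ (j+1 ≤ x ∧ x ≤ n) := by
  rw [Finset.mem_insert] at hx
  rcases hx with rfl | hx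
  · exact Or.inl rfl
  · rw [Finset.mem_image] at hx
    obtain ⟨y, hy, rfl⟩ := hx
    right
    by_cases hzR : ∃ C ∈ R, 0 ∈ C
    · obtain ⟨C, hC, h0⟩ := hzR
      have := zb_spec hR hC h0
      have hyR := Finset.mem_range.mp ((hR.1 _ this.2.1).2 hy)
      omega
    · push_neg at hzR
      rw [zb_empty hzR] at hy
      simp at hy

lemma zb_mem_of_witness (hR : IsNC (n-j) R) {y : ℕ} (hy : y ∈ zb R) :
    zb R ∈ R ∧ 0 ∈ zb R := by
  by_cases hzR : ∃ C ∈ R, 0 ∈ C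
  · obtain ⟨C, hC, h0⟩ := hzR
    have := zb_spec hR hC h0
    exact ⟨this.2.1, this.2.2.1⟩
  · push_neg at hzR
    rw [zb_empty hzR] at hy
    simp at hy

lemma push (hR : IsNC (n-j) R) {C : Finset ℕ} (hC : C ∈ R) :
    ∃ X ∈ dec j Q R, ∀ y ∈ C, y + (j+1) ∈ X := by
  by_cases h0 : 0 ∈ C
  · refine ⟨insert 0 ((zb R).image (· + (j+1))), ?_, ?_⟩
    · unfold dec; simp
    · intro y hy
      rw [(zb_spec hR hC h0).1]
      exact Finset.mem_insert_of_mem (Finset.mem_image_of_mem _ hy)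
  · refine ⟨C.image (· + (j+1)), ?_, fun y hy => Finset.mem_image_of_mem _ hy⟩
    unfold dec
    apply Finset.mem_union_left
    apply Finset.mem_union_right
    exact Finset.mem_image_of_mem _ (Finset.mem_filter.mpr ⟨hC, h0⟩)

lemma pull (hR : IsNC (n-j) R) {X : Finset ℕ} (hX : X ∈ dec j Q R)
    {w : ℕ} (hw : w ∈ X) (hwj : j + 1 ≤ w) (hQ : IsNC j Q) :
    ∃ C ∈ R, (∀ z ∈ X, j+1 ≤ z → z - (j+1) ∈ C) ∧ (0 ∈ X → 0 ∈ C) := by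
  unfold dec at hX
  rw [Finset.mem_union, Finset.mem_union] at hX
  rcases hX with (hX | hX) | hX
  · exact absurd ((memIQ hQ hX).2 w hw).2 (by omega)
  · rw [Finset.mem_image] at hX
    obtain ⟨C, hC, rfl⟩ := hX
    rw [Finset.mem_filter] at hC
    refine ⟨C, hC.1, ?_, ?_⟩
    · intro z hz hzj
      rw [Finset.mem_image] at hz
      obtain ⟨y, hy, rfl⟩ := hz
      simpa [Nat.add_sub_cancel] using hy
    · intro h0
      rw [Finset.mem_image] at h0
      obtain ⟨y, hy, hy0⟩ := h0
      omega
  · rw [Finset.mem_singleton] at hX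
    subst hX
    have hzw : w ∈ (zb R).image (· + (j+1)) := by
      rcases Finset.mem_insert.mp hw with rfl | h
      · omega
      · exact h
    rw [Finset.mem_image] at hzw
    obtain ⟨y, hy, _⟩ := hzw
    obtain ⟨hzmem, hz0⟩ := zb_mem_of_witness hR hy
    refine ⟨zb R, hzmem, ?_, fun _ => hz0⟩
    intro z hz hzj
    rcases Finset.mem_insert.mp hz with rfl | h
    · omega
    · rw [Finset.mem_image] at h
      obtain ⟨y', hy', rfl⟩ := h
      simpa [Nat.add_sub_cancel] using hy'

/-- the elements of outer-ish blocks are 0 or ≥ j+1 -/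
lemma out_bound (hjn : j ≤ n) (hQ : IsNC j Q) (hR : IsNC (n-j) R) {X : Finset ℕ}
    (hX : X ∈ dec j Q R) (hnQ : ∃ x ∈ X, j + 1 ≤ x) :
    ∀ x ∈ X, x = 0 ∨ j + 1 ≤ x := by
  unfold dec at hX
  rw [Finset.mem_union, Finset.mem_union] at hX
  rcases hX with (hX | hX) | hX
  · obtain ⟨x, hx, hxj⟩ := hnQ
    exact absurd ((memIQ hQ hX).2 x hx).2 (by omega)
  · intro x hx
    have := (memIR hjn hR hX).2 x hx
    omega
  · rw [Finset.mem_singleton] at hX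
    subst hX
    intro x hx
    rcases memZ hjn hR hx with h | h
    · exact Or.inl h
    · exact Or.inr h.1

lemma mem_dec {B : Finset ℕ} :
    B ∈ dec j Q R ↔ B ∈ Q.image (fun B => B.image (· + 1)) ∨
      B ∈ (R.filter (fun B => 0 ∉ B)).image (fun B => B.image (· + (j+1))) ∨
      B = insert 0 ((zb R).image (· + (j+1))) := by
  unfold dec
  rw [Finset.mem_union, Finset.mem_union, Finset.mem_singleton, or_assoc]

lemma dec_blocks (hjn : j ≤ n) (hQ : IsNC j Q) (hR : IsNC (n-j) R) :
    ∀ B ∈ dec j Q R, B.Nonempty ∧ B ⊆ Finset.range (n+1) := by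
  intro B hB
  rcases mem_dec.mp hB with hB | hB | hB
  · obtain ⟨hne, hbd⟩ := memIQ hQ hB
    exact ⟨hne, fun x hx => Finset.mem_range.mpr (by have := hbd x hx; omega)⟩
  · obtain ⟨hne, hbd⟩ := memIR hjn hR hB
    exact ⟨hne, fun x hx => Finset.mem_range.mpr (by have := hbd x hx; omega)⟩
  · subst hB
    refine ⟨⟨0, Finset.mem_insert_self _ _⟩, fun x hx => Finset.mem_range.mpr ?_⟩
    rcases memZ hjn hR hx with h | h <;> omega

lemma dec_cover (hjn : j ≤ n) (hQ : IsNC j Q) (hR : IsNC (n-j) R) :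
    ∀ x < n+1, ∃! B, B ∈ dec j Q R ∧ x ∈ B := by
  intro x hx
  rcases (by omega : x = 0 ∨ (1 ≤ x ∧ x ≤ j) ∨ (j+1 ≤ x ∧ x ≤ n)) with rfl | hcase | hcase
  · refine ⟨insert 0 ((zb R).image (· + (j+1))), ⟨mem_dec.mpr (Or.inr (Or.inr rfl)),
      Finset.mem_insert_self _ _⟩, ?_⟩
    rintro C ⟨hC, h0C⟩
    rcases mem_dec.mp hC with hC | hC | hC
    · exact absurd ((memIQ hQ hC).2 0 h0C).1 (by omega)
    · exact absurd ((memIR hjn hR hC).2 0 h0C).1 (by omega)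
    · exact hC
  · obtain ⟨Bq, ⟨hBq, hxBq⟩, uq⟩ := hQ.2.1 (x-1) (by omega)
    refine ⟨Bq.image (· + 1), ⟨mem_dec.mpr (Or.inl (Finset.mem_image_of_mem _ hBq)),
      Finset.mem_image.mpr ⟨x-1, hxBq, by omega⟩⟩, ?_⟩
    rintro C ⟨hC, hxC⟩
    rcases mem_dec.mp hC with hC | hC | hC
    · rw [Finset.mem_image] at hC
      obtain ⟨Cq, hCq, rfl⟩ := hC
      rw [Finset.mem_image] at hxC
      obtain ⟨y, hy, hyx⟩ := hxC
      have : y = x - 1 := by omega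
      subst this
      rw [uq Cq ⟨hCq, hy⟩]
    · exact absurd ((memIR hjn hR hC).2 x hxC).1 (by omega)
    · subst hC
      rcases memZ hjn hR hxC with h | h <;> omega
  · obtain ⟨Br, ⟨hBr, hyBr⟩, ur⟩ := hR.2.1 (x-(j+1)) (by omega)
    by_cases h0 : 0 ∈ Br
    · obtain ⟨hzbBr, _, _, _⟩ := zb_spec hR hBr h0
      refine ⟨insert 0 ((zb R).image (· + (j+1))), ⟨mem_dec.mpr (Or.inr (Or.inr rfl)),
        Finset.mem_insert_of_mem (Finset.mem_image.mpr ⟨x-(j+1), hzbBr ▸ hyBr, by omega⟩)⟩, ?_⟩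
      rintro C ⟨hC, hxC⟩
      rcases mem_dec.mp hC with hC | hC | hC
      · exact absurd ((memIQ hQ hC).2 x hxC).2 (by omega)
      · rw [Finset.mem_image] at hC
        obtain ⟨Cr, hCr, rfl⟩ := hC
        rw [Finset.mem_filter] at hCr
        rw [Finset.mem_image] at hxC
        obtain ⟨y, hy, hyx⟩ := hxC
        have : y = x - (j+1) := by omega
        subst this
        exact absurd (ur Cr ⟨hCr.1, hy⟩ ▸ h0) hCr.2
      · exact hC
    · refine ⟨Br.image (· + (j+1)), ⟨mem_dec.mpr (Or.inr (Or.inl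
        (Finset.mem_image_of_mem _ (Finset.mem_filter.mpr ⟨hBr, h0⟩)))),
        Finset.mem_image.mpr ⟨x-(j+1), hyBr, by omega⟩⟩, ?_⟩
      rintro C ⟨hC, hxC⟩
      rcases mem_dec.mp hC with hC | hC | hC
      · exact absurd ((memIQ hQ hC).2 x hxC).2 (by omega)
      · rw [Finset.mem_image] at hC
        obtain ⟨Cr, hCr, rfl⟩ := hC
        rw [Finset.mem_filter] at hCr
        rw [Finset.mem_image] at hxC
        obtain ⟨y, hy, hyx⟩ := hxC
        have : y = x - (j+1) := by omega
        subst this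
        rw [ur Cr ⟨hCr.1, hy⟩]
      · subst hC
        rcases Finset.mem_insert.mp hxC with rfl | hxC
        · omega
        · rw [Finset.mem_image] at hxC
          obtain ⟨y, hy, hyx⟩ := hxC
          obtain ⟨hzmem, hz0⟩ := zb_mem_of_witness hR hy
          have : y = x - (j+1) := by omega
          subst this
          exact absurd (ur (zb R) ⟨hzmem, hy⟩ ▸ hz0) h0

lemma blk_bound (hjn : j ≤ n) (hQ : IsNC j Q) (hR : IsNC (n-j) R) {B : Finset ℕ}
    (hB : B ∈ dec j Q R) :
    (B ∈ Q.image (fun B => B.image (· + 1)) ∧ ∀ x ∈ B, 1 ≤ x ∧ x ≤ j) ∨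
    (∀ x ∈ B, x = 0 ∨ j+1 ≤ x) := by
  rcases mem_dec.mp hB with h | h | h
  · exact Or.inl ⟨h, (memIQ hQ h).2⟩
  · refine Or.inr fun x hx => ?_
    have := (memIR hjn hR h).2 x hx
    omega
  · subst h
    refine Or.inr fun x hx => ?_
    rcases memZ hjn hR hx with h | h
    · omega
    · omega

lemma dec_nocross (hjn : j ≤ n) (hQ : IsNC j Q) (hR : IsNC (n-j) R) :
    ¬∃ p₁ q₁ p₂ q₂ : ℕ, p₁ < q₁ ∧ q₁ < p₂ ∧ p₂ < q₂ ∧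
      (∃ B ∈ dec j Q R, p₁ ∈ B ∧ p₂ ∈ B) ∧ (∃ B ∈ dec j Q R, q₁ ∈ B ∧ q₂ ∈ B) ∧
      ¬∃ B ∈ dec j Q R, q₁ ∈ B ∧ p₂ ∈ B := by
  rintro ⟨p₁, q₁, p₂, q₂, h1, h2, h3, ⟨X, hX, hp₁, hp₂⟩, ⟨Y, hY, hq₁, hq₂⟩, hno⟩
  rcases blk_bound hjn hQ hR hX with ⟨hXQ, hXb⟩ | hXb
  · rcases blk_bound hjn hQ hR hY with ⟨hYQ, hYb⟩ | hYb
    · -- both inner: crossing in Q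
      rw [Finset.mem_image] at hXQ hYQ
      obtain ⟨Bx, hBx, rfl⟩ := hXQ
      obtain ⟨By, hBy, rfl⟩ := hYQ
      have hmem : ∀ (C : Finset ℕ) (z : ℕ), z ∈ C.image (· + 1) → z - 1 ∈ C ∧ z = (z-1)+1 := by
        intro C z hz
        rw [Finset.mem_image] at hz
        obtain ⟨y, hy, rfl⟩ := hz
        simpa using hy
      refine hQ.2.2 ⟨p₁-1, q₁-1, p₂-1, q₂-1, ?_, ?_, ?_,
        ⟨Bx, hBx, (hmem _ _ hp₁).1, (hmem _ _ hp₂).1⟩,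
        ⟨By, hBy, (hmem _ _ hq₁).1, (hmem _ _ hq₂).1⟩, ?_⟩
      · have := (hXb p₁ hp₁).1; have := (hYb q₁ hq₁).1; omega
      · have := (hYb q₁ hq₁).1; have := (hXb p₂ hp₂).1; omega
      · have := (hXb p₂ hp₂).1; have := (hYb q₂ hq₂).1; omega
      · rintro ⟨E, hE, hq₁E, hp₂E⟩
        refine hno ⟨E.image (· + 1), mem_dec.mpr (Or.inl (Finset.mem_image_of_mem _ hE)), ?_, ?_⟩
        · have h := (hYb q₁ hq₁).1
          exact Finset.mem_image.mpr ⟨q₁-1, hq₁E, by omega⟩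
        · have h := (hXb p₂ hp₂).1
          exact Finset.mem_image.mpr ⟨p₂-1, hp₂E, by omega⟩
    · -- X inner, Y outer
      have hq := hYb q₁ hq₁
      have hp := (hXb p₁ hp₁).1
      have hp2 := (hXb p₂ hp₂).2
      omega
  · rcases blk_bound hjn hQ hR hY with ⟨hYQ, hYb⟩ | hYb
    · -- X outer, Y inner
      have hq1 := (hYb q₁ hq₁)
      have hq2 := (hYb q₂ hq₂)
      have hp1 := hXb p₁ hp₁
      have hp2 := hXb p₂ hp₂
      omega
    · -- both outer
      have hq1 := hYb q₁ hq₁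
      have hq2 := hYb q₂ hq₂
      have hp1 := hXb p₁ hp₁
      have hp2 := hXb p₂ hp₂
      obtain ⟨Cx, hCx, hCxmap, hCx0⟩ := pull hR hX hp₂ (by omega) hQ
      obtain ⟨Cy, hCy, hCymap, hCy0⟩ := pull hR hY hq₁ (by omega) hQ
      by_cases hs : p₁ = 0 ∧ q₁ = j + 1
      · -- special case
        have h0Cx : 0 ∈ Cx := hCx0 (hs.1 ▸ hp₁)
        obtain ⟨X', hX', hmap⟩ := push (Q := Q) hR hCx
        refine hno ⟨X', hX', ?_, ?_⟩
        · have := hmap 0 h0Cx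
          rwa [zero_add, ← hs.2] at this
        · have := hmap (p₂ - (j+1)) (hCxmap p₂ hp₂ (by omega))
          rwa [show p₂ - (j+1) + (j+1) = p₂ by omega] at this
      · refine hR.2.2 ⟨p₁-(j+1), q₁-(j+1), p₂-(j+1), q₂-(j+1),
          by omega, by omega, by omega, ⟨Cx, hCx, ?_, hCxmap p₂ hp₂ (by omega)⟩,
          ⟨Cy, hCy, hCymap q₁ hq₁ (by omega), hCymap q₂ hq₂ (by omega)⟩, ?_⟩
        · rcases hp1 with rfl | hp1
          · rw [show (0:ℕ) - (j+1) = 0 by omega]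
            exact hCx0 hp₁
          · exact hCxmap p₁ hp₁ hp1
        · rintro ⟨E, hE, hq₁E, hp₂E⟩
          obtain ⟨X', hX', hmap⟩ := push (Q := Q) hR hE
          refine hno ⟨X', hX', ?_, ?_⟩
          · have := hmap _ hq₁E
            rwa [show q₁ - (j+1) + (j+1) = q₁ by omega] at this
          · have := hmap _ hp₂E
            rwa [show p₂ - (j+1) + (j+1) = p₂ by omega] at this

lemma dec_isNC (hjn : j ≤ n) (hQ : IsNC j Q) (hR : IsNC (n-j) R) :
    IsNC (n+1) (dec j Q R) :=
  ⟨dec_blocks hjn hQ hR, dec_cover hjn hQ hR, dec_nocross hjn hQ hR⟩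

end Decode

section Encode
variable {n : ℕ} {P : Finset (Finset ℕ)}

lemma zbP_spec (hP : IsNC (n+1) P) :
    zb P ∈ P ∧ 0 ∈ zb P ∧ ∀ B ∈ P, 0 ∈ B → B = zb P := by
  obtain ⟨B, ⟨hB, h0⟩, _⟩ := hP.2.1 0 (by omega)
  have := zb_spec hP hB h0
  exact ⟨this.2.1, this.2.2⟩

lemma jO_le (hP : IsNC (n+1) P) : jO n P ≤ n := by
  unfold jO
  split
  · next h =>
    have hm := Finset.min'_mem _ h
    have : ((zb P).erase 0).min' h ∈ zb P := Finset.mem_of_mem_erase hm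
    have := Finset.mem_range.mp ((hP.1 _ (zbP_spec hP).1).2 this)
    omega
  · exact le_rfl

lemma jO_bound (hP : IsNC (n+1) P) : ∀ x ∈ zb P, x = 0 ∨ jO n P + 1 ≤ x := by
  intro x hx
  by_cases hx0 : x = 0
  · exact Or.inl hx0
  · right
    have hxe : x ∈ (zb P).erase 0 := Finset.mem_erase.mpr ⟨hx0, hx⟩
    have hne : ((zb P).erase 0).Nonempty := ⟨x, hxe⟩
    have hmin : ((zb P).erase 0).min' hne ≤ x := Finset.min'_le _ _ hxe
    have hmem := Finset.min'_mem _ hne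
    have hm0 : ((zb P).erase 0).min' hne ≠ 0 := (Finset.mem_erase.mp hmem).1
    unfold jO
    rw [dif_pos hne]
    omega

lemma jO_second (hP : IsNC (n+1) P) (hne : ((zb P).erase 0).Nonempty) :
    jO n P + 1 ∈ zb P := by
  have hmem := Finset.min'_mem _ hne
  have hm0 : ((zb P).erase 0).min' hne ≠ 0 := (Finset.mem_erase.mp hmem).1
  have : jO n P + 1 = ((zb P).erase 0).min' hne := by
    unfold jO; rw [dif_pos hne]; omega
  rw [this]
  exact Finset.mem_of_mem_erase hmem

lemma jO_singleton (hP : IsNC (n+1) P) (hne : ¬((zb P).erase 0).Nonempty) :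
    zb P = {0} ∧ jO n P = n := by
  rw [Finset.not_nonempty_iff_eq_empty] at hne
  rcases (Finset.erase_eq_empty_iff _ _).mp hne with h | h
  · exact absurd ((zbP_spec hP).2.1) (h ▸ Finset.notMem_empty 0)
  · refine ⟨h, ?_⟩
    unfold jO
    rw [dif_neg]
    rw [Finset.not_nonempty_iff_eq_empty, hne]

lemma blk_disj (hP : IsNC (n+1) P) {B C : Finset ℕ} (hB : B ∈ P) (hC : C ∈ P)
    (hBC : B ≠ C) : ∀ x ∈ B, x ∉ C := by
  intro x hxB hxC
  have hxn : x < n + 1 := Finset.mem_range.mp ((hP.1 B hB).2 hxB)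
  obtain ⟨W, _, uw⟩ := hP.2.1 x hxn
  exact hBC ((uw B ⟨hB, hxB⟩).trans (uw C ⟨hC, hxC⟩).symm)

lemma S5 (hP : IsNC (n+1) P) : ∀ B ∈ P, B ≠ zb P →
    (∀ x ∈ B, 1 ≤ x ∧ x ≤ jO n P) ∨ (∀ x ∈ B, jO n P + 1 ≤ x) := by
  intro B hB hBz
  have hdisj := blk_disj hP hB (zbP_spec hP).1 hBz
  have h0B : ∀ x ∈ B, 1 ≤ x := by
    intro x hx
    rcases Nat.eq_zero_or_pos x with rfl | h
    · exact absurd (zbP_spec hP).2.1 (hdisj 0 hx)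
    · exact h
  have hub : ∀ x ∈ B, x ≤ n := fun x hx => by
    have := Finset.mem_range.mp ((hP.1 B hB).2 hx); omega
  by_cases hne : ((zb P).erase 0).Nonempty
  · by_cases hall : ∀ x ∈ B, x ≤ jO n P
    · exact Or.inl fun x hx => ⟨h0B x hx, hall x hx⟩
    · push_neg at hall
      obtain ⟨y, hy, hygt⟩ := hall
      have hj2 := jO_second hP hne
      have hyne : y ≠ jO n P + 1 := fun h => hdisj y hy (h ▸ hj2)
      right
      intro x hx
      by_contra hxle
      refine hP.2.2 ⟨0, x, jO n P + 1, y, ?_, ?_, ?_,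
        ⟨zb P, (zbP_spec hP).1, (zbP_spec hP).2.1, hj2⟩, ⟨B, hB, hx, hy⟩, ?_⟩
      · have := h0B x hx; omega
      · omega
      · omega
      · rintro ⟨D, hD, hxD, hjD⟩
        have hxn : x < n + 1 := by have := hub x hx; omega
        obtain ⟨W, _, uw⟩ := hP.2.1 x hxn
        have : D = B := (uw D ⟨hD, hxD⟩).trans (uw B ⟨hB, hx⟩).symm
        subst this
        exact hdisj _ hjD hj2
  · exact Or.inl fun x hx => ⟨h0B x hx, by
      have := (jO_singleton hP hne).2
      have := hub x hx
      omega⟩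

lemma Qo_isNC (hP : IsNC (n+1) P) : IsNC (jO n P) (Qo n P) := by
  set j := jO n P with hj
  refine ⟨?_, ?_, ?_⟩
  · intro B' hB'
    rw [Qo, Finset.mem_image] at hB'
    obtain ⟨B, hB, rfl⟩ := hB'
    rw [Finset.mem_filter] at hB
    refine ⟨(hP.1 B hB.1).1.image _, ?_⟩
    intro x hx
    rw [Finset.mem_image] at hx
    obtain ⟨y, hy, rfl⟩ := hx
    have := hB.2 y hy
    rw [Finset.mem_range]
    omega
  · intro y hy
    have hxn : y + 1 < n + 1 := by have := jO_le hP; omega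
    obtain ⟨B, ⟨hB, hxB⟩, u⟩ := hP.2.1 (y+1) hxn
    have hBz : B ≠ zb P := by
      intro h
      have := jO_bound hP (y+1) (h ▸ hxB)
      omega
    have hcond : ∀ x ∈ B, 1 ≤ x ∧ x ≤ j := by
      rcases S5 hP B hB hBz with h | h
      · exact h
      · exact absurd (h (y+1) hxB) (by omega)
    refine ⟨B.image (· - 1), ⟨Finset.mem_image_of_mem _
      (Finset.mem_filter.mpr ⟨hB, hcond⟩), Finset.mem_image.mpr ⟨y+1, hxB, by omega⟩⟩, ?_⟩
    rintro C' ⟨hC', hyC'⟩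
    rw [Qo, Finset.mem_image] at hC'
    obtain ⟨C, hC, rfl⟩ := hC'
    rw [Finset.mem_filter] at hC
    rw [Finset.mem_image] at hyC'
    obtain ⟨x', hx', hx'y⟩ := hyC'
    have h1 := (hC.2 x' hx').1
    have : x' = y + 1 := by omega
    subst this
    rw [u C ⟨hC.1, hx'⟩]
  · rintro ⟨p₁, q₁, p₂, q₂, h1, h2, h3, ⟨X', hX', hp₁, hp₂⟩, ⟨Y', hY', hq₁, hq₂⟩, hno⟩
    rw [Qo, Finset.mem_image] at hX' hY'
    obtain ⟨X, hX, rfl⟩ := hX'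
    obtain ⟨Y, hY, rfl⟩ := hY'
    rw [Finset.mem_filter] at hX hY
    have hmem : ∀ (C : Finset ℕ), (∀ x ∈ C, 1 ≤ x ∧ x ≤ j) →
        ∀ z ∈ C.image (· - 1), z + 1 ∈ C := by
      intro C hcond z hz
      rw [Finset.mem_image] at hz
      obtain ⟨y, hy, rfl⟩ := hz
      have := (hcond y hy).1
      rwa [show y - 1 + 1 = y by omega]
    refine hP.2.2 ⟨p₁+1, q₁+1, p₂+1, q₂+1, by omega, by omega, by omega,
      ⟨X, hX.1, hmem X hX.2 _ hp₁, hmem X hX.2 _ hp₂⟩,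
      ⟨Y, hY.1, hmem Y hY.2 _ hq₁, hmem Y hY.2 _ hq₂⟩, ?_⟩
    rintro ⟨D, hD, hq₁D, hp₂D⟩
    have hq₁Y := hmem Y hY.2 _ hq₁
    have hxn : q₁ + 1 < n + 1 := by
      have := Finset.mem_range.mp ((hP.1 Y hY.1).2 hq₁Y); omega
    obtain ⟨W, _, uw⟩ := hP.2.1 (q₁+1) hxn
    have hDY : D = Y := (uw D ⟨hD, hq₁D⟩).trans (uw Y ⟨hY.1, hq₁Y⟩).symm
    rw [hDY] at hp₂D
    exact hno ⟨Y.image (· - 1), Finset.mem_image_of_mem _ (Finset.mem_filter.mpr hY),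
      hq₁, Finset.mem_image.mpr ⟨p₂+1, hp₂D, by omega⟩⟩

lemma Ro_isNC (hP : IsNC (n+1) P) : IsNC (n - jO n P) (Ro n P) := by
  set j := jO n P with hj
  have hjle := jO_le hP
  refine ⟨?_, ?_, ?_⟩
  · intro B' hB'
    rw [Ro, Finset.mem_erase, Finset.mem_image] at hB'
    obtain ⟨hne, B, hB, rfl⟩ := hB'
    rw [Finset.mem_filter] at hB
    refine ⟨Finset.nonempty_iff_ne_empty.mpr hne, ?_⟩
    intro z hz
    rw [Finset.mem_image] at hz
    obtain ⟨x, hx, rfl⟩ := hz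
    rw [Finset.mem_erase] at hx
    have hcond := hB.2 x hx.2
    have hub : x ≤ n := by
      have := Finset.mem_range.mp ((hP.1 B hB.1).2 hx.2); omega
    rw [Finset.mem_range]
    omega
  · intro y hy
    have hxn : y + (j+1) < n + 1 := by omega
    obtain ⟨B, ⟨hB, hxB⟩, u⟩ := hP.2.1 (y+(j+1)) hxn
    have hcond : ∀ x ∈ B, x = 0 ∨ j + 1 ≤ x := by
      by_cases hBz : B = zb P
      · exact hBz ▸ jO_bound hP
      · rcases S5 hP B hB hBz with h | h
        · exact absurd (h _ hxB).2 (by omega)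
        · exact fun x hx => Or.inr (h x hx)
    have hBmem : (B.erase 0).image (· - (j+1)) ∈ Ro n P := by
      rw [Ro, Finset.mem_erase]
      constructor
      · intro h
        have : y ∈ (B.erase 0).image (· - (j+1)) :=
          Finset.mem_image.mpr ⟨y+(j+1), Finset.mem_erase.mpr ⟨by omega, hxB⟩, by omega⟩
        rw [h] at this
        simp at this
      · exact Finset.mem_image_of_mem _ (Finset.mem_filter.mpr ⟨hB, hcond⟩)
    refine ⟨(B.erase 0).image (· - (j+1)), ⟨hBmem,
      Finset.mem_image.mpr ⟨y+(j+1), Finset.mem_erase.mpr ⟨by omega, hxB⟩, by omega⟩⟩, ?_⟩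
    rintro C' ⟨hC', hyC'⟩
    rw [Ro, Finset.mem_erase, Finset.mem_image] at hC'
    obtain ⟨hne, C, hC, rfl⟩ := hC'
    rw [Finset.mem_filter] at hC
    rw [Finset.mem_image] at hyC'
    obtain ⟨x', hx', hx'y⟩ := hyC'
    rw [Finset.mem_erase] at hx'
    rcases hC.2 x' hx'.2 with h | h
    · exact absurd h hx'.1
    · have : x' = y + (j+1) := by omega
      subst this
      rw [u C ⟨hC.1, hx'.2⟩]
  · rintro ⟨p₁, q₁, p₂, q₂, h1, h2, h3, ⟨X', hX', hp₁, hp₂⟩, ⟨Y', hY', hq₁, hq₂⟩, hno⟩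
    rw [Ro, Finset.mem_erase, Finset.mem_image] at hX' hY'
    obtain ⟨hneX, X, hX, rfl⟩ := hX'
    obtain ⟨hneY, Y, hY, rfl⟩ := hY'
    rw [Finset.mem_filter] at hX hY
    have hmem : ∀ (C : Finset ℕ), C ∈ P → (∀ x ∈ C, x = 0 ∨ j+1 ≤ x) →
        ∀ z ∈ (C.erase 0).image (· - (j+1)), z + (j+1) ∈ C := by
      intro C hCP hcond z hz
      rw [Finset.mem_image] at hz
      obtain ⟨x, hx, rfl⟩ := hz
      rw [Finset.mem_erase] at hx
      rcases hcond x hx.2 with h | h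
      · exact absurd h hx.1
      · rw [show x - (j+1) + (j+1) = x by omega]
        exact hx.2
    refine hP.2.2 ⟨p₁+(j+1), q₁+(j+1), p₂+(j+1), q₂+(j+1), by omega, by omega, by omega,
      ⟨X, hX.1, hmem X hX.1 hX.2 _ hp₁, hmem X hX.1 hX.2 _ hp₂⟩,
      ⟨Y, hY.1, hmem Y hY.1 hY.2 _ hq₁, hmem Y hY.1 hY.2 _ hq₂⟩, ?_⟩
    rintro ⟨D, hD, hq₁D, hp₂D⟩
    have hq₁Y := hmem Y hY.1 hY.2 _ hq₁
    have hxn : q₁ + (j+1) < n + 1 := by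
      have := Finset.mem_range.mp ((hP.1 Y hY.1).2 hq₁Y); omega
    obtain ⟨W, _, uw⟩ := hP.2.1 (q₁+(j+1)) hxn
    have hDY : D = Y := (uw D ⟨hD, hq₁D⟩).trans (uw Y ⟨hY.1, hq₁Y⟩).symm
    rw [hDY] at hp₂D
    refine hno ⟨(Y.erase 0).image (· - (j+1)), by
      rw [Ro, Finset.mem_erase, Finset.mem_image]
      exact ⟨hneY, Y, Finset.mem_filter.mpr hY, rfl⟩, hq₁, ?_⟩
    exact Finset.mem_image.mpr ⟨p₂+(j+1), Finset.mem_erase.mpr ⟨by omega, hp₂D⟩, by omega⟩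

lemma Ro_empty_of_sing (hP : IsNC (n+1) P) (hne : ¬((zb P).erase 0).Nonempty) :
    Ro n P = ∅ := by
  obtain ⟨hz0, hjn⟩ := jO_singleton hP hne
  rw [Finset.eq_empty_iff_forall_notMem]
  intro C' hC'
  rw [Ro, Finset.mem_erase, Finset.mem_image] at hC'
  obtain ⟨hCne, C, hC, rfl⟩ := hC'
  rw [Finset.mem_filter] at hC
  obtain ⟨z, hz⟩ := Finset.nonempty_iff_ne_empty.mpr hCne
  rw [Finset.mem_image] at hz
  obtain ⟨x, hx, rfl⟩ := hz
  rw [Finset.mem_erase] at hx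
  rcases hC.2 x hx.2 with h | h
  · exact hx.1 h
  · have : x ≤ n := by
      have := Finset.mem_range.mp ((hP.1 C hC.1).2 hx.2); omega
    omega

lemma zbRo (hP : IsNC (n+1) P) :
    zb (Ro n P) = ((zb P).erase 0).image (· - (jO n P + 1)) := by
  by_cases hne : ((zb P).erase 0).Nonempty
  · set j := jO n P
    have hT : ((zb P).erase 0).image (· - (j + 1)) ∈ Ro n P := by
      rw [Ro, Finset.mem_erase]
      constructor
      · intro h
        have h2 := jO_second hP hne
        have : (0:ℕ) ∈ ((zb P).erase 0).image (· - (j + 1)) :=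
          Finset.mem_image.mpr ⟨j+1, Finset.mem_erase.mpr ⟨by omega, h2⟩, by omega⟩
        rw [h] at this
        simp at this
      · exact Finset.mem_image_of_mem _
          (Finset.mem_filter.mpr ⟨(zbP_spec hP).1, jO_bound hP⟩)
    have h0T : (0:ℕ) ∈ ((zb P).erase 0).image (· - (j + 1)) :=
      Finset.mem_image.mpr ⟨j+1, Finset.mem_erase.mpr ⟨by omega, jO_second hP hne⟩, by omega⟩
    exact (zb_spec (Ro_isNC hP) hT h0T).1
  · rw [Ro_empty_of_sing hP hne]
    rw [(jO_singleton hP hne).1]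
    simp [zb]

lemma Z_eq (hP : IsNC (n+1) P) :
    insert 0 ((zb (Ro n P)).image (· + (jO n P + 1))) = zb P := by
  rw [zbRo hP]
  by_cases hne : ((zb P).erase 0).Nonempty
  · rw [Finset.image_image]
    have : ((zb P).erase 0).image ((· + (jO n P + 1)) ∘ (· - (jO n P + 1))) = (zb P).erase 0 := by
      rw [show ((· + (jO n P + 1)) ∘ (· - (jO n P + 1))) = fun x => x - (jO n P + 1) + (jO n P + 1) from rfl]
      rw [Finset.image_congr (g := id), Finset.image_id]
      intro x hx
      rw [Finset.mem_coe, Finset.mem_erase] at hx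
      rcases jO_bound hP x hx.2 with h | h
      · exact absurd h hx.1
      · simp only [id]
        omega
    rw [this, Finset.insert_erase (zbP_spec hP).2.1]
  · rw [(jO_singleton hP hne).1]
    simp

lemma dec_enc (hP : IsNC (n+1) P) : dec (jO n P) (Qo n P) (Ro n P) = P := by
  set j := jO n P with hjdef
  ext B
  constructor
  · intro hB
    rcases mem_dec.mp hB with hB | hB | hB
    · rw [Finset.mem_image] at hB
      obtain ⟨C', hC', rfl⟩ := hB
      rw [Qo, Finset.mem_image] at hC'
      obtain ⟨C, hC, rfl⟩ := hC'
      rw [Finset.mem_filter] at hC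
      have : (C.image (· - 1)).image (· + 1) = C := by
        rw [Finset.image_image]
        rw [Finset.image_congr (g := id), Finset.image_id]
        intro x hx
        rw [Finset.mem_coe] at hx
        have := (hC.2 x hx).1
        simp only [Function.comp, id]
        omega
      rw [this]
      exact hC.1
    · rw [Finset.mem_image] at hB
      obtain ⟨C', hC', rfl⟩ := hB
      rw [Finset.mem_filter] at hC'
      obtain ⟨hC'Ro, hC'0⟩ := hC'
      rw [Ro, Finset.mem_erase, Finset.mem_image] at hC'Ro
      obtain ⟨hCne, C, hC, rfl⟩ := hC'Ro
      rw [Finset.mem_filter] at hC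
      have h0C : 0 ∉ C := by
        intro h0
        have hCzb : C = zb P := (zbP_spec hP).2.2 C hC.1 h0
        by_cases hne : ((zb P).erase 0).Nonempty
        · refine hC'0 ?_
          rw [hCzb]
          exact Finset.mem_image.mpr ⟨j+1, Finset.mem_erase.mpr ⟨by omega, jO_second hP hne⟩, by omega⟩
        · refine hCne ?_
          rw [hCzb, (jO_singleton hP hne).1]
          simp
      rw [Finset.erase_eq_of_notMem h0C]
      have hCbd : ∀ x ∈ C, j + 1 ≤ x := by
        intro x hx
        rcases hC.2 x hx with h | h
        · exact absurd h (fun he => h0C (he ▸ hx))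
        · exact h
      have : (C.image (· - (j+1))).image (· + (j+1)) = C := by
        rw [Finset.image_image]
        rw [Finset.image_congr (g := id), Finset.image_id]
        intro x hx
        rw [Finset.mem_coe] at hx
        have := hCbd x hx
        simp only [Function.comp, id]
        omega
      rw [this]
      exact hC.1
    · rw [hB, Z_eq hP]
      exact (zbP_spec hP).1
  · intro hB
    by_cases hBz : B = zb P
    · subst hBz
      rw [mem_dec]
      exact Or.inr (Or.inr (Z_eq hP).symm)
    · rcases S5 hP B hB hBz with hcond | hcond
      · rw [mem_dec]
        left
        rw [Finset.mem_image]
        refine ⟨B.image (· - 1), ?_, ?_⟩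
        · exact Finset.mem_image_of_mem _ (Finset.mem_filter.mpr ⟨hB, hcond⟩)
        · rw [Finset.image_image]
          rw [Finset.image_congr (g := id), Finset.image_id]
          intro x hx
          rw [Finset.mem_coe] at hx
          have := (hcond x hx).1
          simp only [Function.comp, id]
          omega
      · -- outer block
        have hub : ∀ x ∈ B, x ≤ n := fun x hx => by
          have := Finset.mem_range.mp ((hP.1 B hB).2 hx); omega
        have hne : ((zb P).erase 0).Nonempty := by
          by_contra hne
          obtain ⟨x, hx⟩ := (hP.1 B hB).1
          have := hcond x hx
          have := hub x hx
          have := (jO_singleton hP hne).2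
          omega
        have h0B : 0 ∉ B := fun h => by have := hcond 0 h; omega
        have hBero : B.erase 0 = B := Finset.erase_eq_of_notMem h0B
        have hRomem : (B.erase 0).image (· - (j+1)) ∈ Ro n P := by
          rw [Ro, Finset.mem_erase]
          refine ⟨?_, Finset.mem_image_of_mem _
            (Finset.mem_filter.mpr ⟨hB, fun x hx => Or.inr (hcond x hx)⟩)⟩
          intro h
          obtain ⟨x, hx⟩ := (hP.1 B hB).1
          have : x - (j+1) ∈ (B.erase 0).image (· - (j+1)) :=
            Finset.mem_image_of_mem _ (by rw [hBero]; exact hx)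
          rw [h] at this
          simp at this
        have h0Ro : 0 ∉ (B.erase 0).image (· - (j+1)) := by
          rw [hBero]
          intro h
          rw [Finset.mem_image] at h
          obtain ⟨x, hx, hx0⟩ := h
          have hj1 : x = j + 1 := by have := hcond x hx; omega
          exact blk_disj hP hB (zbP_spec hP).1 hBz x hx (hj1 ▸ jO_second hP hne)
        rw [mem_dec]
        right; left
        rw [Finset.mem_image]
        refine ⟨(B.erase 0).image (· - (j+1)), Finset.mem_filter.mpr ⟨hRomem, h0Ro⟩, ?_⟩
        rw [hBero, Finset.image_image]
        rw [Finset.image_congr (g := id), Finset.image_id]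
        intro x hx
        rw [Finset.mem_coe] at hx
        have := hcond x hx
        simp only [Function.comp, id]
        omega

end Encode

lemma rt (d : ℕ) (B : Finset ℕ) : (B.image (· + d)).image (· - d) = B := by
  rw [Finset.image_image]
  conv_rhs => rw [← Finset.image_id (s := B)]
  exact Finset.image_congr (fun x _ => by simp)

section Inv
variable {n j : ℕ} {Q R : Finset (Finset ℕ)}

lemma zb_dec (hjn : j ≤ n) (hQ : IsNC j Q) (hR : IsNC (n-j) R) :
    zb (dec j Q R) = insert 0 ((zb R).image (· + (j+1))) :=
  (zb_spec (dec_isNC hjn hQ hR) (mem_dec.mpr (Or.inr (Or.inr rfl)))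
    (Finset.mem_insert_self _ _)).1

lemma erase_Z : (insert 0 ((zb R).image (· + (j+1)))).erase 0 = (zb R).image (· + (j+1)) := by
  apply Finset.erase_insert
  intro h
  rw [Finset.mem_image] at h
  obtain ⟨y, _, hy⟩ := h
  omega

lemma jO_dec (hjn : j ≤ n) (hQ : IsNC j Q) (hR : IsNC (n-j) R) :
    jO n (dec j Q R) = j := by
  unfold jO
  rw [zb_dec hjn hQ hR, erase_Z]
  by_cases hnj : n - j = 0
  · have hR0 : R = ∅ := IsNC_zero (hnj ▸ hR)
    have : zb R = ∅ := by rw [hR0]; simp [zb]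
    rw [this]
    rw [dif_neg (by simp)]
    omega
  · obtain ⟨C, ⟨hC, h0⟩, _⟩ := hR.2.1 0 (by omega)
    have hzR : 0 ∈ zb R := (zb_spec hR hC h0).2.2.1
    have hmem : j + 1 ∈ (zb R).image (· + (j+1)) := Finset.mem_image.mpr ⟨0, hzR, by omega⟩
    rw [dif_pos ⟨j+1, hmem⟩]
    have hmin : ((zb R).image (· + (j+1))).min' ⟨j+1, hmem⟩ = j + 1 := by
      apply le_antisymm (Finset.min'_le _ _ hmem)
      apply Finset.le_min'
      intro y hy
      rw [Finset.mem_image] at hy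
      obtain ⟨z, _, rfl⟩ := hy
      omega
    omega

lemma Qo_dec (hjn : j ≤ n) (hQ : IsNC j Q) (hR : IsNC (n-j) R) :
    Qo n (dec j Q R) = Q := by
  unfold Qo
  rw [jO_dec hjn hQ hR]
  have hfil : (dec j Q R).filter (fun B => ∀ x ∈ B, 1 ≤ x ∧ x ≤ j)
      = Q.image (fun B => B.image (· + 1)) := by
    ext C
    rw [Finset.mem_filter]
    constructor
    · rintro ⟨hC, hcond⟩
      rcases mem_dec.mp hC with h | h | h
      · exact h
      · obtain ⟨⟨x, hx⟩, hbd⟩ := memIR hjn hR h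
        have := hbd x hx
        have := hcond x hx
        omega
      · subst h
        have := hcond 0 (Finset.mem_insert_self _ _)
        omega
    · intro hC
      exact ⟨mem_dec.mpr (Or.inl hC), (memIQ hQ hC).2⟩
  rw [hfil, Finset.image_image]
  conv_rhs => rw [← Finset.image_id (s := Q)]
  apply Finset.image_congr
  intro B hB
  simp only [Function.comp, id]
  exact rt 1 B

lemma Ro_dec (hjn : j ≤ n) (hQ : IsNC j Q) (hR : IsNC (n-j) R) :
    Ro n (dec j Q R) = R := by
  unfold Ro
  rw [jO_dec hjn hQ hR]
  have hfil : (dec j Q R).filter (fun B => ∀ x ∈ B, x = 0 ∨ j + 1 ≤ x)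
      = (R.filter (fun B => 0 ∉ B)).image (fun B => B.image (· + (j+1)))
        ∪ {insert 0 ((zb R).image (· + (j+1)))} := by
    ext C
    rw [Finset.mem_filter, Finset.mem_union, Finset.mem_singleton]
    constructor
    · rintro ⟨hC, hcond⟩
      rcases mem_dec.mp hC with h | h | h
      · obtain ⟨⟨x, hx⟩, hbd⟩ := memIQ hQ h
        have h1 := (hbd x hx).1
        have h2 := (hbd x hx).2
        rcases hcond x hx with h' | h' <;> omega
      · exact Or.inl h
      · exact Or.inr h
    · intro hC
      rcases hC with h | h
      · refine ⟨mem_dec.mpr (Or.inr (Or.inl h)), fun x hx => ?_⟩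
        have := (memIR hjn hR h).2 x hx
        omega
      · subst h
        refine ⟨mem_dec.mpr (Or.inr (Or.inr rfl)), fun x hx => ?_⟩
        rcases memZ hjn hR hx with h' | h'
        · exact Or.inl h'
        · exact Or.inr h'.1
  rw [hfil, Finset.image_union, Finset.image_singleton, Finset.image_image]
  have h1 : (R.filter (fun B => 0 ∉ B)).image
      ((fun B => (B.erase 0).image (· - (j+1))) ∘ (fun B => B.image (· + (j+1))))
      = R.filter (fun B => 0 ∉ B) := by
    conv_rhs => rw [← Finset.image_id (s := R.filter (fun B => 0 ∉ B))]
    apply Finset.image_congr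
    intro B hB
    simp only [Function.comp, id]
    have h0 : (0:ℕ) ∉ B.image (· + (j+1)) := by
      intro h
      rw [Finset.mem_image] at h
      obtain ⟨y, _, hy⟩ := h
      omega
    rw [Finset.erase_eq_of_notMem h0]
    exact rt (j+1) B
  have h2 : ((insert 0 ((zb R).image (· + (j+1)))).erase 0).image (· - (j+1)) = zb R := by
    rw [erase_Z, rt]
  rw [h1, h2]
  by_cases hnj : n - j = 0
  · have hR0 : R = ∅ := IsNC_zero (hnj ▸ hR)
    subst hR0
    simp [zb]
  · obtain ⟨C, ⟨hC, h0⟩, _⟩ := hR.2.1 0 (by omega)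
    obtain ⟨hzbC, hzbR, hzb0, huniq⟩ := zb_spec hR hC h0
    have hun : R.filter (fun B => 0 ∉ B) ∪ {zb R} = R := by
      ext D
      rw [Finset.mem_union, Finset.mem_filter, Finset.mem_singleton]
      constructor
      · rintro (⟨hD, _⟩ | rfl)
        · exact hD
        · exact hzbR
      · intro hD
        by_cases h0D : 0 ∈ D
        · exact Or.inr (huniq D hD h0D)
        · exact Or.inl ⟨hD, h0D⟩
    rw [hun]
    apply Finset.erase_eq_of_notMem
    intro h
    exact absurd (hR.1 ∅ h).1 (by simp)

end Inv

section Weight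
variable {n j : ℕ} {Q R : Finset (Finset ℕ)}

lemma dec_weight (c : ℕ → ℂ) (s : ℕ) (hjn : j ≤ n) (hQ : IsNC j Q) (hR : IsNC (n-j) R) :
    mw c s (dec j Q R) =
      (∏ B ∈ Q, c B.card) * (if n - j = 0 then c (s+1) else mw c (s+1) R) := by
  have d2 : Disjoint (Q.image (fun B => B.image (· + 1)))
      ((R.filter (fun B => 0 ∉ B)).image (fun B => B.image (· + (j+1)))) := by
    rw [Finset.disjoint_left]
    intro B hB hB'
    obtain ⟨⟨x, hx⟩, hbd⟩ := memIQ hQ hB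
    have := (memIR hjn hR hB').2 x hx
    have := hbd x hx
    omega
  have d1 : Disjoint (Q.image (fun B => B.image (· + 1)) ∪
      (R.filter (fun B => 0 ∉ B)).image (fun B => B.image (· + (j+1))))
      {insert 0 ((zb R).image (· + (j+1)))} := by
    rw [Finset.disjoint_right]
    intro B hB hB'
    rw [Finset.mem_singleton] at hB
    subst hB
    rcases Finset.mem_union.mp hB' with hB' | hB'
    · exact absurd ((memIQ hQ hB').2 0 (Finset.mem_insert_self _ _)).1 (by omega)
    · exact absurd ((memIR hjn hR hB').2 0 (Finset.mem_insert_self _ _)).1 (by omega)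
  have hinj1 : Set.InjOn (fun B => Finset.image (· + 1) B) ↑Q := by
    intro B _ C _ hBC
    have := congrArg (Finset.image (· - 1)) hBC
    simpa [rt] using this
  have hinjj : Set.InjOn (fun B => Finset.image (· + (j+1)) B) ↑(R.filter (fun B => 0 ∉ B)) := by
    intro B _ C _ hBC
    have := congrArg (Finset.image (· - (j+1))) hBC
    simpa [rt] using this
  unfold mw
  unfold dec
  rw [Finset.prod_union d1, Finset.prod_union d2, Finset.prod_singleton,
    Finset.prod_image hinj1, Finset.prod_image hinjj]
  have e1 : ∀ B ∈ Q, (if 0 ∈ B.image (· + 1) then c (s + (B.image (· + 1)).card)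
      else c (B.image (· + 1)).card) = c B.card := by
    intro B _
    rw [if_neg, Finset.card_image_of_injective _ (add_left_injective 1)]
    intro hmem
    rw [Finset.mem_image] at hmem
    obtain ⟨y, _, hy⟩ := hmem
    omega
  have ej : ∀ B ∈ R.filter (fun B => 0 ∉ B),
      (if 0 ∈ B.image (· + (j+1)) then c (s + (B.image (· + (j+1))).card)
      else c (B.image (· + (j+1))).card) = c B.card := by
    intro B _
    rw [if_neg, Finset.card_image_of_injective _ (add_left_injective (j+1))]
    intro hmem
    rw [Finset.mem_image] at hmem
    obtain ⟨y, _, hy⟩ := hmem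
    omega
  have hZ0 : (0:ℕ) ∉ (zb R).image (· + (j+1)) := by
    intro hmem
    rw [Finset.mem_image] at hmem
    obtain ⟨y, _, hy⟩ := hmem
    omega
  have hZcard : (insert 0 ((zb R).image (· + (j+1)))).card = (zb R).card + 1 := by
    rw [Finset.card_insert_of_notMem hZ0,
      Finset.card_image_of_injective _ (add_left_injective (j+1))]
  rw [Finset.prod_congr rfl e1, Finset.prod_congr rfl ej, if_pos (Finset.mem_insert_self _ _), hZcard]
  by_cases hnj : n - j = 0
  · have hR0 : R = ∅ := IsNC_zero (hnj ▸ hR)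
    subst hR0
    rw [if_pos hnj]
    have : zb (∅ : Finset (Finset ℕ)) = ∅ := by simp [zb]
    rw [this]
    simp
  · rw [if_neg hnj]
    obtain ⟨C, ⟨hC, h0⟩, _⟩ := hR.2.1 0 (by omega)
    obtain ⟨hzbC, hzbR, hzb0, huniq⟩ := zb_spec hR hC h0
    rw [← Finset.prod_filter_mul_prod_filter_not R (fun B => 0 ∈ B)]
    have hfz : R.filter (fun B => 0 ∈ B) = {zb R} := by
      ext D
      rw [Finset.mem_filter, Finset.mem_singleton]
      constructor
      · rintro ⟨hD, h0D⟩; exact huniq D hD h0D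
      · rintro rfl; exact ⟨hzbR, hzb0⟩
    rw [hfz, Finset.prod_singleton, if_pos hzb0]
    have : ∀ B ∈ R.filter (fun B => ¬ 0 ∈ B),
        (if 0 ∈ B then c (s + 1 + B.card) else c B.card) = c B.card := by
      intro B hB
      rw [if_neg (Finset.mem_filter.mp hB).2]
    rw [Finset.prod_congr rfl this]
    have harg : s + ((zb R).card + 1) = s + 1 + (zb R).card := by omega
    rw [harg]
    ring

end Weight

lemma REC (c : ℕ → ℂ) (s n : ℕ) :
    h c s (n+1) = ∑ j ∈ Finset.range (n+1), aN c j * h c (s+1) (n-j) := by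
  have hrhs : ∀ j ∈ Finset.range (n+1), aN c j * h c (s+1) (n-j)
      = ∑ QR ∈ NCN j ×ˢ NCN (n-j), (∏ B ∈ QR.1, c B.card) *
          (if n - j = 0 then c (s+1) else mw c (s+1) QR.2) := by
    intro j _
    have hh : h c (s+1) (n-j) = ∑ R ∈ NCN (n-j),
        (if n - j = 0 then c (s+1) else mw c (s+1) R) := by
      by_cases hnj : n - j = 0
      · rw [hnj, h, if_pos rfl, NCN_zero, Finset.sum_singleton, if_pos rfl]
      · rw [h, if_neg hnj]
        exact Finset.sum_congr rfl fun R _ => by rw [if_neg hnj]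
    rw [hh, aN, Finset.sum_mul_sum, ← Finset.sum_product']
  rw [Finset.sum_congr rfl hrhs, Finset.sum_sigma']
  rw [h, if_neg (by omega)]
  refine (Finset.sum_bij' (fun x _ => dec x.1 x.2.1 x.2.2)
    (fun P _ => (⟨jO n P, (Qo n P, Ro n P)⟩ : (_ : ℕ) × (Finset (Finset ℕ) × Finset (Finset ℕ))))
    ?_ ?_ ?_ ?_ ?_).symm
  · rintro ⟨j, Q, R⟩ hx
    simp only [Finset.mem_sigma, Finset.mem_product] at hx
    obtain ⟨hj, hQ, hR⟩ := hx
    rw [Finset.mem_range] at hj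
    show dec j Q R ∈ NCN (n+1)
    exact mem_NCN.mpr (dec_isNC (by omega) (mem_NCN.mp hQ) (mem_NCN.mp hR))
  · intro P hP
    have hP' := mem_NCN.mp hP
    simp only [Finset.mem_sigma, Finset.mem_product]
    exact ⟨Finset.mem_range.mpr (by have := jO_le hP'; omega),
      mem_NCN.mpr (Qo_isNC hP'), mem_NCN.mpr (Ro_isNC hP')⟩
  · rintro ⟨j, Q, R⟩ hx
    simp only [Finset.mem_sigma, Finset.mem_product] at hx
    obtain ⟨hj, hQ, hR⟩ := hx
    rw [Finset.mem_range] at hj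
    have h1 := jO_dec (by omega : j ≤ n) (mem_NCN.mp hQ) (mem_NCN.mp hR)
    have h2 := Qo_dec (by omega : j ≤ n) (mem_NCN.mp hQ) (mem_NCN.mp hR)
    have h3 := Ro_dec (by omega : j ≤ n) (mem_NCN.mp hQ) (mem_NCN.mp hR)
    simp only [h1, h2, h3]
  · intro P hP
    exact dec_enc (mem_NCN.mp hP)
  · rintro ⟨j, Q, R⟩ hx
    simp only [Finset.mem_sigma, Finset.mem_product] at hx
    obtain ⟨hj, hQ, hR⟩ := hx
    rw [Finset.mem_range] at hj
    exact (dec_weight c s (by omega) (mem_NCN.mp hQ) (mem_NCN.mp hR)).symm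


def IsNCF (n : ℕ) (P : Finset (Finset (Fin n))) : Prop :=
  (∀ B ∈ P, B.Nonempty) ∧
  (∀ x : Fin n, ∃! B, B ∈ P ∧ x ∈ B) ∧
  ¬∃ p₁ q₁ p₂ q₂ : Fin n, p₁ < q₁ ∧ q₁ < p₂ ∧ p₂ < q₂ ∧
    (∃ B ∈ P, p₁ ∈ B ∧ p₂ ∈ B) ∧ (∃ B ∈ P, q₁ ∈ B ∧ q₂ ∈ B) ∧
    ¬∃ B ∈ P, q₁ ∈ B ∧ p₂ ∈ B

variable {n : ℕ}

def toN (B : Finset (Fin n)) : Finset ℕ := B.image Fin.val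

def toF (hn : 1 ≤ n) (B : Finset ℕ) : Finset (Fin n) :=
  B.image (fun x => (⟨min x (n-1), by omega⟩ : Fin n))

lemma mem_toN {B : Finset (Fin n)} {x : ℕ} : x ∈ toN B ↔ ∃ y ∈ B, (y : ℕ) = x := by
  simp [toN]

lemma mem_toF (hn : 1 ≤ n) {B : Finset ℕ} (hB : B ⊆ Finset.range n) {x : Fin n} :
    x ∈ toF hn B ↔ (x : ℕ) ∈ B := by
  simp only [toF, Finset.mem_image]
  constructor
  · rintro ⟨y, hy, rfl⟩
    have := Finset.mem_range.mp (hB hy)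
    simpa [min_eq_left (by omega : y ≤ n-1)] using hy
  · intro hx
    exact ⟨x, hx, by ext; simp [min_eq_left (by omega : (x:ℕ) ≤ n-1)]⟩

lemma toF_toN (hn : 1 ≤ n) (B : Finset (Fin n)) : toF hn (toN B) = B := by
  ext x
  rw [mem_toF hn (by intro y hy; rw [mem_toN] at hy; rcases hy with ⟨z,_,rfl⟩; simp [z.isLt]),
    mem_toN]
  constructor
  · rintro ⟨y, hy, hyx⟩; rwa [show y = x from Fin.ext hyx] at hy
  · intro hx; exact ⟨x, hx, rfl⟩

lemma toN_toF (hn : 1 ≤ n) {B : Finset ℕ} (hB : B ⊆ Finset.range n) : toN (toF hn B) = B := by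
  ext x
  rw [mem_toN]
  constructor
  · rintro ⟨y, hy, rfl⟩; rwa [mem_toF hn hB] at hy
  · intro hx
    have hxn := Finset.mem_range.mp (hB hx)
    exact ⟨⟨x, hxn⟩, by rwa [mem_toF hn hB], rfl⟩

lemma card_toN (B : Finset (Fin n)) : (toN B).card = B.card :=
  Finset.card_image_of_injective _ Fin.val_injective

lemma isNC_toN {P : Finset (Finset (Fin n))} (hP : IsNCF n P) : IsNC n (P.image toN) := by
  obtain ⟨hne, hcov, hcr⟩ := hP
  refine ⟨?_, ?_, ?_⟩
  · intro B' hB'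
    rw [Finset.mem_image] at hB'
    rcases hB' with ⟨B, hB, rfl⟩
    refine ⟨(hne B hB).image _, ?_⟩
    intro x hx
    rw [mem_toN] at hx
    rcases hx with ⟨y, _, rfl⟩
    simp [y.isLt]
  · intro x hx
    obtain ⟨B, ⟨hB, hxB⟩, huniq⟩ := hcov ⟨x, hx⟩
    refine ⟨toN B, ⟨Finset.mem_image_of_mem _ hB, mem_toN.mpr ⟨⟨x,hx⟩, hxB, rfl⟩⟩, ?_⟩
    rintro C' ⟨hC', hxC'⟩
    rw [Finset.mem_image] at hC'
    rcases hC' with ⟨C, hC, rfl⟩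
    rw [mem_toN] at hxC'
    rcases hxC' with ⟨y, hyC, hyx⟩
    have : y = ⟨x, hx⟩ := Fin.ext hyx
    subst this
    rw [huniq C ⟨hC, hyC⟩]
  · rintro ⟨p₁, q₁, p₂, q₂, h1, h2, h3, ⟨X', hX', hp₁, hp₂⟩, ⟨Y', hY', hq₁, hq₂⟩, hno⟩
    rw [Finset.mem_image] at hX' hY'
    rcases hX' with ⟨X, hX, rfl⟩
    rcases hY' with ⟨Y, hY, rfl⟩
    rw [mem_toN] at hp₁ hp₂ hq₁ hq₂
    rcases hp₁ with ⟨a₁, ha₁, rfl⟩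
    rcases hp₂ with ⟨a₂, ha₂, rfl⟩
    rcases hq₁ with ⟨b₁, hb₁, rfl⟩
    rcases hq₂ with ⟨b₂, hb₂, rfl⟩
    exact hcr ⟨a₁, b₁, a₂, b₂, h1, h2, h3, ⟨X, hX, ha₁, ha₂⟩, ⟨Y, hY, hb₁, hb₂⟩,
      fun ⟨D, hD, h₁, h₂⟩ => hno ⟨toN D, Finset.mem_image_of_mem _ hD,
        mem_toN.mpr ⟨b₁, h₁, rfl⟩, mem_toN.mpr ⟨a₂, h₂, rfl⟩⟩⟩

lemma isNC_toF (hn : 1 ≤ n) {P : Finset (Finset ℕ)} (hP : IsNC n P) : IsNCF n (P.image (toF hn)) := by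
  obtain ⟨hne, hcov, hcr⟩ := hP
  have hsub : ∀ B ∈ P, B ⊆ Finset.range n := fun B hB => (hne B hB).2
  refine ⟨?_, ?_, ?_⟩
  · intro B' hB'
    rw [Finset.mem_image] at hB'
    rcases hB' with ⟨B, hB, rfl⟩
    exact (hne B hB).1.image _
  · intro x
    obtain ⟨B, ⟨hB, hxB⟩, huniq⟩ := hcov x.val x.isLt
    refine ⟨toF hn B, ⟨Finset.mem_image_of_mem _ hB, (mem_toF hn (hsub B hB)).mpr hxB⟩, ?_⟩
    rintro C' ⟨hC', hxC'⟩
    rw [Finset.mem_image] at hC'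
    rcases hC' with ⟨C, hC, rfl⟩
    rw [mem_toF hn (hsub C hC)] at hxC'
    rw [huniq C ⟨hC, hxC'⟩]
  · rintro ⟨p₁, q₁, p₂, q₂, h1, h2, h3, ⟨X', hX', hp₁, hp₂⟩, ⟨Y', hY', hq₁, hq₂⟩, hno⟩
    rw [Finset.mem_image] at hX' hY'
    rcases hX' with ⟨X, hX, rfl⟩
    rcases hY' with ⟨Y, hY, rfl⟩
    rw [mem_toF hn (hsub X hX)] at hp₁ hp₂
    rw [mem_toF hn (hsub Y hY)] at hq₁ hq₂
    exact hcr ⟨p₁, q₁, p₂, q₂, h1, h2, h3, ⟨X, hX, hp₁, hp₂⟩, ⟨Y, hY, hq₁, hq₂⟩,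
      fun ⟨D, hD, h₁, h₂⟩ => hno ⟨toF hn D, Finset.mem_image_of_mem _ hD,
        (mem_toF hn (hsub D hD)).mpr h₁, (mem_toF hn (hsub D hD)).mpr h₂⟩⟩


lemma mem_NCPartitions {n : ℕ} {P : Finset (Finset (Fin n))} :
    P ∈ NCPartitions n ↔ IsNCF n P := by
  unfold NCPartitions IsNCF
  simp only [Finset.mem_filter, Finset.mem_univ, true_and]

lemma FINEQ (c : ℕ → ℂ) {n : ℕ} (hn : 1 ≤ n) :
    ∑ P ∈ NCPartitions n, ∏ B ∈ P, c B.card = aN c n := by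
  unfold aN
  refine Finset.sum_bij' (fun P _ => P.image toN) (fun P _ => P.image (toF hn))
    (fun P hP => mem_NCN.mpr (isNC_toN (mem_NCPartitions.mp hP)))
    (fun P hP => mem_NCPartitions.mpr (isNC_toF hn (mem_NCN.mp hP)))
    ?_ ?_ ?_
  · intro P hP
    show (P.image toN).image (toF hn) = P
    rw [Finset.image_image]
    have : ∀ B ∈ P, (toF hn ∘ toN) B = id B := fun B _ => toF_toN hn B
    rw [Finset.image_congr this, Finset.image_id]
  · intro P hP
    show (P.image (toF hn)).image toN = P
    rw [Finset.image_image]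
    have : ∀ B ∈ P, (toN ∘ toF hn) B = id B := by
      intro B hB
      exact toN_toF hn ((mem_NCN.mp hP).1 B hB).2
    rw [Finset.image_congr this, Finset.image_id]
  · intro P hP
    show ∏ B ∈ P, c B.card = ∏ B ∈ P.image toN, c B.card
    rw [Finset.prod_image]
    · exact Finset.prod_congr rfl fun B _ => by rw [card_toN]
    · intro B _ C _ hBC
      have := congrArg (toF hn) hBC
      rwa [toF_toN hn, toF_toN hn] at this

noncomputable def A (c : ℕ → ℂ) : PowerSeries ℂ := PowerSeries.mk (aN c)

lemma coeff_pow_congr (f g : PowerSeries ℂ) :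
    ∀ (k d : ℕ), (∀ i ≤ d, coeff i f = coeff i g) →
      coeff d (f^k) = coeff d (g^k)
  | 0, d, _ => rfl
  | k+1, d, h => by
    rw [pow_succ, pow_succ, coeff_mul, coeff_mul]
    refine Finset.sum_congr rfl fun p hp => ?_
    rw [Finset.HasAntidiagonal.mem_antidiagonal] at hp
    rw [coeff_pow_congr f g k p.1 (fun i hi => h i (by omega)), h p.2 (by omega)]

lemma tri_ext {n j : ℕ} (hj : j ≤ n) (g : ℕ → ℂ) :
    ∑ k ∈ Finset.range (n - j + 1), g k
      = ∑ k ∈ Finset.range (n+1), if j + k ≤ n then g k else 0 := by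
  have : Finset.range (n - j + 1) = (Finset.range (n+1)).filter (fun k => j + k ≤ n) := by
    ext k; simp; omega
  rw [this, Finset.sum_filter]

lemma coeff_A (c : ℕ → ℂ) (j : ℕ) : coeff j (A c) = aN c j := by
  simp [A]

lemma HK (c : ℕ → ℂ) : ∀ (n : ℕ), ∀ s, h c s n
    = ∑ k ∈ Finset.range (n+1), c (s+k) * coeff (n-k) ((A c)^k) := by
  intro n
  induction n using Nat.strong_induction_on with
  | _ n ih =>
    match n with
    | 0 =>
      intro s
      simp [h]
    | Nat.succ n =>
      intro s
      rw [REC]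
      have lhs : ∑ j ∈ Finset.range (n+1), aN c j * h c (s+1) (n-j)
          = ∑ j ∈ Finset.range (n+1), ∑ k ∈ Finset.range (n+1),
              if j + k ≤ n then aN c j * (c (s+1+k) * coeff (n-j-k) ((A c)^k)) else 0 := by
        refine Finset.sum_congr rfl fun j hj => ?_
        rw [Finset.mem_range] at hj
        rw [ih (n-j) (by omega) (s+1), Finset.mul_sum, tri_ext (by omega : j ≤ n)]
      rw [lhs]
      have rhs : ∑ k ∈ Finset.range (n+1+1), c (s+k) * coeff (n+1-k) ((A c)^k)
          = ∑ k ∈ Finset.range (n+1), ∑ j ∈ Finset.range (n+1),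
              if k + j ≤ n then c (s+1+k) * (aN c j * coeff (n-k-j) ((A c)^k)) else 0 := by
        rw [Finset.sum_range_succ']
        have h0 : c (s+0) * coeff (n+1-0) ((A c)^0) = 0 := by
          simp [coeff_one]
        rw [h0, add_zero]
        refine Finset.sum_congr rfl fun k hk => ?_
        rw [Finset.mem_range] at hk
        rw [pow_succ']
        rw [show n + 1 - (k+1) = n - k by omega, coeff_mul,
          Finset.Nat.sum_antidiagonal_eq_sum_range_succ_mk,
          show s + (k+1) = s+1+k by omega]
        rw [Finset.mul_sum, tri_ext (by omega : k ≤ n)]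
        refine Finset.sum_congr rfl fun j hj => ?_
        by_cases hcase : k + j ≤ n
        · simp only [if_pos hcase, coeff_A]
        · simp only [if_neg hcase]
      rw [rhs, Finset.sum_comm]
      refine Finset.sum_congr rfl fun k _ => Finset.sum_congr rfl fun j _ => ?_
      by_cases hcase : j + k ≤ n
      · rw [if_pos hcase, if_pos (by omega : k + j ≤ n), show n - j - k = n - k - j by omega]
        ring
      · rw [if_neg hcase, if_neg (by omega : ¬ (k + j ≤ n))]

noncomputable def Fm (m : ℕ → ℂ) : PowerSeries ℂ :=
  PowerSeries.mk (fun i => if i = 0 then 1 else m i)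

noncomputable def Phi (c m : ℕ → ℂ) (n : ℕ) : ℂ :=
  ∑ k ∈ Finset.range (n+1), (if k = 0 then 0 else c k) * coeff (n-k) ((Fm m)^k)

lemma one_add_mk (m : ℕ → ℂ) :
    1 + (PowerSeries.mk fun i => if i = 0 then 0 else m i) = Fm m := by
  ext i
  simp only [map_add, coeff_one, coeff_mk, Fm]
  by_cases hi : i = 0 <;> simp [hi]

lemma coeff_rhs (c m : ℕ → ℂ) (n : ℕ) :
    coeff n (pscomp (PowerSeries.mk fun i => if i = 0 then 0 else c i)
      (PowerSeries.X * (1 + PowerSeries.mk fun i => if i = 0 then 0 else m i)))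
    = Phi c m n := by
  rw [one_add_mk]
  unfold pscomp Phi
  rw [coeff_mk]
  refine Finset.sum_congr rfl fun k hk => ?_
  rw [Finset.mem_range] at hk
  rw [coeff_mk, mul_pow]
  congr 1
  rw [show n = (n - k) + k by omega, PowerSeries.coeff_X_pow_mul, Nat.add_sub_cancel]

lemma eqn_iff (c m : ℕ → ℂ) :
    ((PowerSeries.mk fun n => if n = 0 then 0 else m n) =
      pscomp (PowerSeries.mk fun n => if n = 0 then 0 else c n)
        (PowerSeries.X * (1 + PowerSeries.mk fun n => if n = 0 then 0 else m n)))
    ↔ (∀ n, 1 ≤ n → m n = Phi c m n) := by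
  constructor
  · intro hE n hn
    have := congrArg (coeff n) hE
    rw [coeff_mk, coeff_rhs, if_neg (by omega)] at this
    exact this
  · intro hm
    ext n
    rw [coeff_mk, coeff_rhs]
    by_cases hn : n = 0
    · subst hn
      simp [Phi]
    · rw [if_neg hn]
      exact hm n (by omega)

lemma A_eq_Fm (c : ℕ → ℂ) : A c = Fm (aN c) := by
  ext i
  simp only [A, Fm, coeff_mk]
  by_cases hi : i = 0
  · subst hi; simp [aN_zero]
  · rw [if_neg hi]

lemma aN_solves (c : ℕ → ℂ) {n : ℕ} (hn : 1 ≤ n) : aN c n = Phi c (aN c) n := by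
  rw [← h_eq_aN c hn, HK c n 0]
  unfold Phi
  rw [← A_eq_Fm]
  refine Finset.sum_congr rfl fun k hk => ?_
  by_cases hk0 : k = 0
  · subst hk0
    rw [if_pos rfl, zero_mul, pow_zero, coeff_one, if_neg (by omega), mul_zero]
  · rw [if_neg hk0, zero_add]

lemma Phi_congr (c m m' : ℕ → ℂ) {n : ℕ}
    (hagree : ∀ i, 1 ≤ i → i < n → m i = m' i) : Phi c m n = Phi c m' n := by
  unfold Phi
  refine Finset.sum_congr rfl fun k hk => ?_
  rw [Finset.mem_range] at hk
  by_cases hk0 : k = 0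
  · simp [hk0]
  · rw [if_neg hk0]
    congr 1
    refine coeff_pow_congr _ _ k (n-k) fun i hi => ?_
    simp only [Fm, coeff_mk]
    by_cases hi0 : i = 0
    · simp [hi0]
    · rw [if_neg hi0, if_neg hi0, hagree i (by omega) (by omega)]

lemma main_equiv (c m : ℕ → ℂ) :
    (∀ n, 1 ≤ n → m n = aN c n) ↔ (∀ n, 1 ≤ n → m n = Phi c m n) := by
  constructor
  · intro hm n hn
    rw [hm n hn, aN_solves c hn]
    exact Phi_congr c _ _ fun i h1 h2 => (hm i h1).symm
  · intro hm n hn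
    induction n using Nat.strong_induction_on with
    | _ n ih =>
      rw [hm n hn, Phi_congr c m (aN c) (fun i h1 h2 => ih i h2 h1), ← aN_solves c hn]

end NCR

/-- The moment-cumulant relation over non-crossing partitions holds for the sequences
`m` (moments) and `c` (free cumulants) if and only if the moment series
`M(z) = Σ_{n≥1} mₙ zⁿ` and the cumulant series `C(z) = Σ_{n≥1} cₙ zⁿ` satisfy the
functional equation `M(z) = C(z·(1 + M(z)))` (the formal form of `G(G⁻¹(z)) = z` for
the Cauchy transform `G` and the `R`-transform). -/
theorem moment_cumulant_iff_functional_equation (m c : ℕ → ℂ) :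
    (∀ n, 1 ≤ n →
      m n = ∑ P ∈ NCPartitions n, ∏ B ∈ P, c B.card) ↔
    (PowerSeries.mk fun n => if n = 0 then 0 else m n) =
      pscomp (PowerSeries.mk fun n => if n = 0 then 0 else c n)
        (PowerSeries.X * (1 + PowerSeries.mk fun n => if n = 0 then 0 else m n)) := by
  rw [NCR.eqn_iff, ← NCR.main_equiv]
  constructor
  · intro h n hn
    rw [h n hn, NCR.FINEQ c hn]
  · intro h n hn
    rw [h n hn, ← NCR.FINEQ c hn]
end

section
/- For a distribution μ with μ(1)=1 and μ(X) ≠ 0, the S-transform defined from moments, S_μ(z) = ((1+z)/z)·M_μ⁻¹(z) with M_μ(z) = Σ_{n≥1}mₙzⁿ, equals the S-transform defined from cumulants, S_μ(z) = R_μ⁻¹(z)/z with R_μ(z) = Σ_{n≥1}kₙzⁿ, where ⁻¹ denotes compositional inverse. -/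
namespace SProof
open PowerSeries Finset

open PowerSeries Finset

local notation "co" => PowerSeries.coeff

lemma coeff_pscomp (f g : PowerSeries ℂ) (n : ℕ) :
    co n (pscomp f g) = ∑ k ∈ range (n+1), co k f * co n (g^k) := by
  simp [pscomp]

lemma coeff_pow_eq_zero {g : PowerSeries ℂ} (hg : constantCoeff g = 0)
    {n k : ℕ} (h : n < k) : co n (g^k) = 0 := by
  have hd : (X : PowerSeries ℂ)^k ∣ g^k :=
    pow_dvd_pow_of_dvd (PowerSeries.X_dvd_iff.2 hg) k
  exact PowerSeries.X_pow_dvd_iff.1 hd n h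

lemma constantCoeff_pscomp (f g : PowerSeries ℂ) :
    constantCoeff (pscomp f g) = constantCoeff f := by
  have := coeff_pscomp f g 0
  simpa using this

lemma coeff_pscomp_stable {g : PowerSeries ℂ} (hg : constantCoeff g = 0)
    (f : PowerSeries ℂ) {n N : ℕ} (h : n ≤ N) :
    co n (pscomp f g) = ∑ k ∈ range (N+1), co k f * co n (g^k) := by
  rw [coeff_pscomp]
  apply Finset.sum_subset (by apply Finset.range_subset_range.2; omega)
  intro k hk hk'
  rw [coeff_pow_eq_zero hg (by simp at hk hk'; omega), mul_zero]

lemma pscomp_add (f₁ f₂ g : PowerSeries ℂ) :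
    pscomp (f₁ + f₂) g = pscomp f₁ g + pscomp f₂ g := by
  ext n
  simp [coeff_pscomp, add_mul, Finset.sum_add_distrib]

lemma pscomp_one (g : PowerSeries ℂ) : pscomp 1 g = 1 := by
  ext n
  rw [coeff_pscomp]
  rw [Finset.sum_eq_single 0]
  · simp
  · intro k hk hk0
    simp [PowerSeries.coeff_one, hk0]
  · simp

lemma pscomp_X_right (f : PowerSeries ℂ) : pscomp f X = f := by
  ext n
  rw [coeff_pscomp, Finset.sum_eq_single n]
  · simp [PowerSeries.coeff_X_pow]
  · intro k hk hkn
    simp [PowerSeries.coeff_X_pow, Ne.symm hkn]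
  · intro h; simp at h

lemma pscomp_X_left {g : PowerSeries ℂ} (hg : constantCoeff g = 0) :
    pscomp X g = g := by
  ext n
  rw [coeff_pscomp]
  rcases Nat.eq_zero_or_pos n with rfl | hn
  · simpa using hg.symm
  rw [Finset.sum_eq_single 1]
  · simp
  · intro k hk hk1
    simp [PowerSeries.coeff_X, hk1]
  · intro h; simp at h; omega

lemma pscomp_mul {g : PowerSeries ℂ} (hg : constantCoeff g = 0) (f₁ f₂ : PowerSeries ℂ) :
    pscomp (f₁ * f₂) g = pscomp f₁ g * pscomp f₂ g := by
  ext n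
  rw [PowerSeries.coeff_mul]
  have hL : co n (pscomp (f₁ * f₂) g)
      = ∑ k ∈ range (n+1), (∑ p ∈ Finset.HasAntidiagonal.antidiagonal k, co p.1 f₁ * co p.2 f₂) * co n (g^k) := by
    rw [coeff_pscomp]
    refine Finset.sum_congr rfl fun k _ => ?_
    rw [PowerSeries.coeff_mul]
  -- turn LHS into a sum over pairs
  have hL2 : co n (pscomp (f₁ * f₂) g)
      = ∑ p ∈ (range (n+1) ×ˢ range (n+1)), co p.1 f₁ * co p.2 f₂ * co n (g^(p.1+p.2)) := by
    rw [hL]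
    have hbU : (range (n+1)).biUnion Finset.HasAntidiagonal.antidiagonal
        = (range (n+1) ×ˢ range (n+1)).filter (fun p => p.1 + p.2 ≤ n) := by
      ext p
      simp only [Finset.mem_biUnion, Finset.mem_range, Finset.HasAntidiagonal.mem_antidiagonal,
        Finset.mem_filter, Finset.mem_product]
      constructor
      · rintro ⟨k, hk, rfl⟩; omega
      · rintro ⟨⟨h1, h2⟩, h3⟩; exact ⟨p.1+p.2, by omega, rfl⟩
    calc ∑ k ∈ range (n+1), (∑ p ∈ Finset.HasAntidiagonal.antidiagonal k, co p.1 f₁ * co p.2 f₂) * co n (g^k)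
        = ∑ k ∈ range (n+1), ∑ p ∈ Finset.HasAntidiagonal.antidiagonal k, co p.1 f₁ * co p.2 f₂ * co n (g^(p.1+p.2)) := by
          refine Finset.sum_congr rfl fun k hk => ?_
          rw [Finset.sum_mul]
          refine Finset.sum_congr rfl fun p hp => ?_
          rw [Finset.HasAntidiagonal.mem_antidiagonal.1 hp]
      _ = ∑ p ∈ (range (n+1)).biUnion Finset.HasAntidiagonal.antidiagonal, co p.1 f₁ * co p.2 f₂ * co n (g^(p.1+p.2)) := by
          rw [Finset.sum_biUnion]
          intro a _ b _ hab
          exact Finset.disjoint_left.2 fun p hp hp' => hab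
            ((Finset.HasAntidiagonal.mem_antidiagonal.1 hp).symm.trans (Finset.HasAntidiagonal.mem_antidiagonal.1 hp'))
      _ = ∑ p ∈ (range (n+1) ×ˢ range (n+1)).filter (fun p => p.1 + p.2 ≤ n),
            co p.1 f₁ * co p.2 f₂ * co n (g^(p.1+p.2)) := by rw [hbU]
      _ = ∑ p ∈ (range (n+1) ×ˢ range (n+1)), co p.1 f₁ * co p.2 f₂ * co n (g^(p.1+p.2)) := by
          refine Finset.sum_subset (Finset.filter_subset _ _) fun p hp hp' => ?_
          simp only [Finset.mem_filter, hp, true_and, not_le] at hp'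
          rw [coeff_pow_eq_zero hg hp', mul_zero]
  rw [hL2]
  have hR : ∑ p ∈ Finset.HasAntidiagonal.antidiagonal n, co p.1 (pscomp f₁ g) * co p.2 (pscomp f₂ g)
      = ∑ p ∈ Finset.HasAntidiagonal.antidiagonal n, ∑ i ∈ range (n+1), ∑ j ∈ range (n+1),
          co i f₁ * co j f₂ * (co p.1 (g^i) * co p.2 (g^j)) := by
    refine Finset.sum_congr rfl fun p hp => ?_
    have h1 : p.1 ≤ n := by have := Finset.HasAntidiagonal.mem_antidiagonal.1 hp; omega
    have h2 : p.2 ≤ n := by have := Finset.HasAntidiagonal.mem_antidiagonal.1 hp; omega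
    rw [coeff_pscomp_stable (N := n) hg f₁ h1, coeff_pscomp_stable (N := n) hg f₂ h2,
      Finset.sum_mul_sum]
    refine Finset.sum_congr rfl fun i _ => Finset.sum_congr rfl fun j _ => by ring
  rw [hR]
  refine Eq.trans (Finset.sum_product ..) (Eq.symm ?_)
  calc ∑ p ∈ Finset.HasAntidiagonal.antidiagonal n, ∑ i ∈ range (n+1), ∑ j ∈ range (n+1),
          co i f₁ * co j f₂ * (co p.1 (g^i) * co p.2 (g^j))
      = ∑ i ∈ range (n+1), ∑ p ∈ Finset.HasAntidiagonal.antidiagonal n, ∑ j ∈ range (n+1),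
          co i f₁ * co j f₂ * (co p.1 (g^i) * co p.2 (g^j)) := Finset.sum_comm
    _ = ∑ i ∈ range (n+1), ∑ j ∈ range (n+1), ∑ p ∈ Finset.HasAntidiagonal.antidiagonal n,
          co i f₁ * co j f₂ * (co p.1 (g^i) * co p.2 (g^j)) := by
          exact Finset.sum_congr rfl fun i _ => Finset.sum_comm
    _ = ∑ i ∈ range (n+1), ∑ j ∈ range (n+1),
          co (i, j).1 f₁ * co (i, j).2 f₂ * co n (g^((i, j).1+(i, j).2)) := by
          refine Finset.sum_congr rfl fun i _ => Finset.sum_congr rfl fun j _ => ?_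
          rw [← Finset.mul_sum, ← PowerSeries.coeff_mul, ← pow_add]

lemma pscomp_pow {g : PowerSeries ℂ} (hg : constantCoeff g = 0) (f : PowerSeries ℂ) (k : ℕ) :
    pscomp (f^k) g = (pscomp f g)^k := by
  induction k with
  | zero => simpa using pscomp_one g
  | succ k ih => rw [pow_succ, pow_succ, pscomp_mul hg, ih]

lemma pscomp_assoc {g h : PowerSeries ℂ} (hg : constantCoeff g = 0)
    (hh : constantCoeff h = 0) (f : PowerSeries ℂ) :
    pscomp (pscomp f g) h = pscomp f (pscomp g h) := by
  ext n
  rw [coeff_pscomp, coeff_pscomp]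
  calc ∑ j ∈ range (n+1), co j (pscomp f g) * co n (h^j)
      = ∑ j ∈ range (n+1), ∑ k ∈ range (n+1), co k f * co j (g^k) * co n (h^j) := by
        refine Finset.sum_congr rfl fun j hj => ?_
        rw [coeff_pscomp_stable (N := n) hg f (by simp at hj; omega), Finset.sum_mul]
    _ = ∑ k ∈ range (n+1), ∑ j ∈ range (n+1), co k f * co j (g^k) * co n (h^j) :=
        Finset.sum_comm
    _ = ∑ k ∈ range (n+1), co k f * ∑ j ∈ range (n+1), co j (g^k) * co n (h^j) := by
        refine Finset.sum_congr rfl fun k _ => ?_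
        rw [Finset.mul_sum]
        exact Finset.sum_congr rfl fun j _ => by ring
    _ = ∑ k ∈ range (n+1), co k f * co n ((pscomp g h)^k) := by
        refine Finset.sum_congr rfl fun k _ => ?_
        rw [← pscomp_pow hh, coeff_pscomp]


open Finset

variable {n : ℕ}

lemma mem_NCPartitions {P : Finset (Finset (Fin n))} :
    P ∈ NCPartitions n ↔
      (∀ B ∈ P, B.Nonempty) ∧
      (∀ x : Fin n, ∃! B, B ∈ P ∧ x ∈ B) ∧
      ¬∃ p₁ q₁ p₂ q₂ : Fin n, p₁ < q₁ ∧ q₁ < p₂ ∧ p₂ < q₂ ∧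
        (∃ B ∈ P, p₁ ∈ B ∧ p₂ ∈ B) ∧ (∃ B ∈ P, q₁ ∈ B ∧ q₂ ∈ B) ∧
        ¬∃ B ∈ P, q₁ ∈ B ∧ p₂ ∈ B := by
  unfold NCPartitions
  exact ⟨fun h => ((@Finset.mem_filter _ _ (Classical.decPred _) _ _).1 h).2,
    fun h => (@Finset.mem_filter _ _ (Classical.decPred _) _ _).2 ⟨Finset.mem_univ _, h⟩⟩

lemma NCPartitions_zero : NCPartitions 0 = {∅} := by
  ext P
  rw [mem_NCPartitions, Finset.mem_singleton]
  constructor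
  · rintro ⟨h1, -, -⟩
    rw [Finset.eq_empty_iff_forall_notMem]
    intro B hB
    obtain ⟨x, -⟩ := h1 B hB
    exact x.elim0
  · rintro rfl
    exact ⟨by simp, fun x => x.elim0, by rintro ⟨p, -⟩; exact p.elim0⟩

/-- the value of the next element of `B` after `x`, or `n` if there is none. -/
def nxt (B : Finset (Fin n)) (x : Fin n) : ℕ :=
  if h : (B.filter fun y => x < y).Nonempty then ((B.filter fun y => x < y).min' h).val else n

lemma lt_nxt (B : Finset (Fin n)) (x : Fin n) : x.val < nxt B x := by
  unfold nxt
  split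
  · next h =>
    have := Finset.min'_mem _ h
    rw [Finset.mem_filter] at this
    exact this.2
  · exact x.isLt

lemma nxt_le (B : Finset (Fin n)) (x : Fin n) : nxt B x ≤ n := by
  unfold nxt
  split
  · exact le_of_lt (Fin.isLt _)
  · exact le_rfl

lemma nxt_le_of_mem {B : Finset (Fin n)} {x y : Fin n} (hy : y ∈ B) (hxy : x < y) :
    nxt B x ≤ y.val := by
  have hne : (B.filter fun y => x < y).Nonempty := ⟨y, Finset.mem_filter.2 ⟨hy, hxy⟩⟩
  unfold nxt
  rw [dif_pos hne]
  exact Finset.min'_le _ _ (Finset.mem_filter.2 ⟨hy, hxy⟩)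

lemma exists_nxt {B : Finset (Fin n)} {x : Fin n} (h : nxt B x < n) :
    ∃ y ∈ B, x < y ∧ y.val = nxt B x := by
  by_cases hne : (B.filter fun y => x < y).Nonempty
  · have hm := Finset.min'_mem _ hne
    rw [Finset.mem_filter] at hm
    exact ⟨_, hm.1, hm.2, by unfold nxt; rw [dif_pos hne]⟩
  · exfalso; unfold nxt at h; rw [dif_neg hne] at h; exact lt_irrefl _ h

/-- the size of the gap after `x`. -/
def gp (B : Finset (Fin n)) (x : Fin n) : ℕ := nxt B x - (x.val + 1)

/-- the gap after `x`: elements strictly between `x` and the next element of `B`. -/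
def Gap (B : Finset (Fin n)) (x : Fin n) : Finset (Fin n) :=
  univ.filter fun y => x < y ∧ y.val < nxt B x

lemma mem_Gap_iff {B : Finset (Fin n)} {x y : Fin n} :
    y ∈ Gap B x ↔ x < y ∧ y.val < nxt B x := by simp [Gap]

def up (B : Finset (Fin n)) (x : Fin n) (i : Fin (gp B x)) : Fin n :=
  ⟨x.val + 1 + i.val, by
    have h1 := i.isLt
    have h2 := nxt_le B x
    unfold gp at h1
    omega⟩

lemma up_val (B : Finset (Fin n)) (x : Fin n) (i : Fin (gp B x)) :
    (up B x i).val = x.val + 1 + i.val := rfl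

lemma up_mem_Gap (B : Finset (Fin n)) (x : Fin n) (i : Fin (gp B x)) :
    up B x i ∈ Gap B x := by
  have h1 := i.isLt
  unfold gp at h1
  rw [mem_Gap_iff]
  constructor
  · rw [Fin.lt_def, up_val]; omega
  · rw [up_val]; omega

lemma up_lt_up {B : Finset (Fin n)} {x : Fin n} {i j : Fin (gp B x)} :
    up B x i < up B x j ↔ i < j := by
  rw [Fin.lt_def, Fin.lt_def, up_val, up_val]; omega

lemma up_injective (B : Finset (Fin n)) (x : Fin n) : Function.Injective (up B x) := by
  intro i j h
  have : (up B x i).val = (up B x j).val := by rw [h]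
  rw [up_val, up_val] at this
  exact Fin.ext (by omega)

lemma exists_up {B : Finset (Fin n)} {x y : Fin n} (hy : y ∈ Gap B x) :
    ∃ i, up B x i = y := by
  rw [mem_Gap_iff, Fin.lt_def] at hy
  refine ⟨⟨y.val - (x.val + 1), by unfold gp; omega⟩, Fin.ext ?_⟩
  rw [up_val]; simp; omega

def dn (B : Finset (Fin n)) (x : Fin n) (S : Finset (Fin n)) : Finset (Fin (gp B x)) :=
  univ.filter fun i => up B x i ∈ S

lemma mem_dn {B : Finset (Fin n)} {x : Fin n} {S : Finset (Fin n)} {i : Fin (gp B x)} :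
    i ∈ dn B x S ↔ up B x i ∈ S := by simp [dn]

lemma up_dn {B : Finset (Fin n)} {x : Fin n} {S : Finset (Fin n)} (hS : S ⊆ Gap B x) :
    (dn B x S).image (up B x) = S := by
  ext y
  simp only [Finset.mem_image]
  constructor
  · rintro ⟨i, hi, rfl⟩; exact mem_dn.1 hi
  · intro hy
    obtain ⟨i, rfl⟩ := exists_up (hS hy)
    exact ⟨i, mem_dn.2 hy, rfl⟩

lemma dn_up {B : Finset (Fin n)} {x : Fin n} {b : Finset (Fin (gp B x))} :
    dn B x (b.image (up B x)) = b := by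
  ext i
  rw [mem_dn, Finset.mem_image]
  constructor
  · rintro ⟨j, hj, hji⟩
    rwa [up_injective B x hji] at hj
  · intro hi; exact ⟨i, hi, rfl⟩

lemma not_mem_of_mem_Gap {B : Finset (Fin n)} {x y : Fin n} (hy : y ∈ Gap B x) : y ∉ B := by
  intro hyB
  rw [mem_Gap_iff] at hy
  exact absurd (nxt_le_of_mem hyB hy.1) (by omega)

lemma Gap_unique {B : Finset (Fin n)} {x x' y : Fin n} (hx : x ∈ B) (hx' : x' ∈ B)
    (hy : y ∈ Gap B x) (hy' : y ∈ Gap B x') : x = x' := by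
  rw [mem_Gap_iff] at hy hy'
  rcases lt_trichotomy x x' with h | h | h
  · exact absurd (nxt_le_of_mem hx' h) (by rw [Fin.lt_def] at hy'; omega)
  · exact h
  · exact absurd (nxt_le_of_mem hx h) (by rw [Fin.lt_def] at hy; omega)

lemma mem_Gap_of_between {B : Finset (Fin n)} {x y₁ y₂ w : Fin n} (h1 : y₁ ∈ Gap B x)
    (h2 : y₂ ∈ Gap B x) (hw1 : y₁ ≤ w) (hw2 : w ≤ y₂) : w ∈ Gap B x := by
  rw [mem_Gap_iff] at h1 h2 ⊢
  rw [Fin.le_def] at hw1 hw2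
  rw [Fin.lt_def] at h1 h2 ⊢
  omega

lemma mem_Gap_of_not_mem {B : Finset (Fin n)} {w : Fin n} (hw : w ∉ B)
    (hex : ∃ x ∈ B, x < w) : ∃ x ∈ B, w ∈ Gap B x := by
  have hne : (B.filter fun u => u < w).Nonempty := by
    obtain ⟨x, hx, hxw⟩ := hex
    exact ⟨x, Finset.mem_filter.2 ⟨hx, hxw⟩⟩
  obtain ⟨x, hxB, hxw, hxmax⟩ : ∃ x ∈ B, x < w ∧ ∀ y ∈ B, y < w → y ≤ x := by
    refine ⟨(B.filter fun u => u < w).max' hne, ?_, ?_, ?_⟩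
    · have := Finset.max'_mem _ hne; rw [Finset.mem_filter] at this; exact this.1
    · have := Finset.max'_mem _ hne; rw [Finset.mem_filter] at this; exact this.2
    · intro y hy hyw
      exact Finset.le_max' (B.filter fun u => u < w) y (Finset.mem_filter.2 ⟨hy, hyw⟩)
  refine ⟨x, hxB, mem_Gap_iff.2 ⟨hxw, ?_⟩⟩
  by_contra hcon
  push_neg at hcon
  have hlt : nxt B x < n := lt_of_le_of_lt hcon w.isLt
  obtain ⟨y, hyB, hxy, hyval⟩ := exists_nxt hlt
  have hyw : y < w := by
    rw [Fin.lt_def]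
    rcases lt_or_eq_of_le (show y.val ≤ w.val by omega) with h | h
    · exact h
    · exact absurd (Fin.ext h ▸ hyB) hw
  exact absurd hxy (not_lt.2 (hxmax y hyB hyw))


section Partition

variable {P : Finset (Finset (Fin n))}

/-- the block of `P` containing `w` (as the union of all blocks containing `w`). -/
def blkOf (P : Finset (Finset (Fin n))) (w : Fin n) : Finset (Fin n) :=
  univ.filter fun y => ∃ B ∈ P, w ∈ B ∧ y ∈ B

lemma block_eq (hP2 : ∀ x : Fin n, ∃! B, B ∈ P ∧ x ∈ B) {B B' : Finset (Fin n)} {w : Fin n}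
    (hB : B ∈ P) (hB' : B' ∈ P) (hw : w ∈ B) (hw' : w ∈ B') : B = B' :=
  (hP2 w).unique ⟨hB, hw⟩ ⟨hB', hw'⟩

lemma blkOf_eq (hP2 : ∀ x : Fin n, ∃! B, B ∈ P ∧ x ∈ B) {B : Finset (Fin n)} {w : Fin n}
    (hB : B ∈ P) (hw : w ∈ B) : blkOf P w = B := by
  ext y
  simp only [blkOf, Finset.mem_filter, Finset.mem_univ, true_and]
  constructor
  · rintro ⟨B', hB', hw', hy⟩
    rwa [block_eq hP2 hB' hB hw' hw] at hy
  · intro hy; exact ⟨B, hB, hw, hy⟩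

lemma blkOf_mem (hP2 : ∀ x : Fin n, ∃! B, B ∈ P ∧ x ∈ B) (w : Fin n) :
    blkOf P w ∈ P ∧ w ∈ blkOf P w := by
  obtain ⟨B, ⟨hB, hw⟩, -⟩ := hP2 w
  rw [blkOf_eq hP2 hB hw]
  exact ⟨hB, hw⟩

/-- Key structural lemma: any block disjoint from the block `B₀` of the minimum lies entirely
within a single gap of `B₀`. -/
lemma block_subset_gap (hP : P ∈ NCPartitions n) {B₀ B : Finset (Fin n)} {z : Fin n}
    (hB₀ : B₀ ∈ P) (hB : B ∈ P) (hne : B ≠ B₀) (hzB : z ∈ B₀) (hzmin : ∀ w : Fin n, z ≤ w) :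
    ∃ x ∈ B₀, B ⊆ Gap B₀ x := by
  obtain ⟨hP1, hP2, hP3⟩ := mem_NCPartitions.1 hP
  have hdisj : ∀ w : Fin n, w ∈ B → w ∉ B₀ := by
    intro w hw hw'
    exact hne (block_eq hP2 hB hB₀ hw hw')
  have hBne : B.Nonempty := hP1 B hB
  set u := B.min' hBne with hu
  have huB : u ∈ B := Finset.min'_mem _ hBne
  have hzu : z < u := lt_of_le_of_ne (hzmin u) (fun h => hdisj u huB (h ▸ hzB))
  obtain ⟨x, hxB₀, hugap⟩ := mem_Gap_of_not_mem (hdisj u huB) ⟨z, hzB, hzu⟩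
  refine ⟨x, hxB₀, fun v hv => ?_⟩
  have hxu : x < u := (mem_Gap_iff.1 hugap).1
  have huv : u ≤ v := Finset.min'_le _ _ hv
  rw [mem_Gap_iff]
  refine ⟨lt_of_lt_of_le hxu huv, ?_⟩
  by_contra hcon
  push_neg at hcon
  have hlt : nxt B₀ x < n := lt_of_le_of_lt hcon v.isLt
  obtain ⟨y, hyB₀, hxy, hyval⟩ := exists_nxt hlt
  have huy : u < y := by
    rw [Fin.lt_def, hyval]
    exact lt_of_lt_of_le (mem_Gap_iff.1 hugap).2 le_rfl
  have hyv : y < v := by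
    rw [Fin.lt_def]
    rcases lt_or_eq_of_le (show y.val ≤ v.val by omega) with h | h
    · exact h
    · exact absurd (Fin.ext h ▸ hyB₀) (hdisj v hv)
  exact hP3 ⟨x, u, y, v, hxu, huy, hyv, ⟨B₀, hB₀, hxB₀, hyB₀⟩, ⟨B, hB, huB, hv⟩,
    fun ⟨B', hB', huB', hyB'⟩ => hdisj y (block_eq hP2 hB' hB huB' huB ▸ hyB') hyB₀⟩

/-- Every point of a gap has its block inside that gap. -/
lemma blkOf_subset_gap (hP : P ∈ NCPartitions n) {B₀ : Finset (Fin n)} {z x y : Fin n}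
    (hB₀ : B₀ ∈ P) (hzB : z ∈ B₀) (hzmin : ∀ w : Fin n, z ≤ w)
    (hx : x ∈ B₀) (hy : y ∈ Gap B₀ x) : blkOf P y ⊆ Gap B₀ x := by
  obtain ⟨-, hP2, -⟩ := mem_NCPartitions.1 hP
  obtain ⟨hBmem, hyB⟩ := blkOf_mem (P := P) hP2 y
  have hne : blkOf P y ≠ B₀ := fun h => not_mem_of_mem_Gap hy (h ▸ hyB)
  obtain ⟨x', hx', hsub⟩ := block_subset_gap hP hB₀ hBmem hne hzB hzmin
  rwa [Gap_unique hx' hx (hsub hyB) hy] at hsub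

end Partition

section Bijection

variable {B₀ : Finset (Fin n)}

/-- Assemble a partition from the block `B₀` and noncrossing partitions of its gaps. -/
def asm (B₀ : Finset (Fin n)) (g : ∀ x ∈ B₀, Finset (Finset (Fin (gp B₀ x)))) :
    Finset (Finset (Fin n)) :=
  insert B₀ (B₀.attach.biUnion fun x => (g x.1 x.2).image (Finset.image (up B₀ x.1)))

/-- Disassemble a partition into the partitions it induces on the gaps of `B₀`. -/
def dis (B₀ : Finset (Fin n)) (P : Finset (Finset (Fin n))) :
    ∀ x ∈ B₀, Finset (Finset (Fin (gp B₀ x))) :=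
  fun x _ => (P.filter fun B => B ⊆ Gap B₀ x).image (dn B₀ x)

lemma mem_asm {g : ∀ x ∈ B₀, Finset (Finset (Fin (gp B₀ x)))} {B : Finset (Fin n)} :
    B ∈ asm B₀ g ↔ B = B₀ ∨ ∃ x, ∃ hx : x ∈ B₀, ∃ b ∈ g x hx, B = b.image (up B₀ x) := by
  unfold asm
  rw [Finset.mem_insert, Finset.mem_biUnion]
  apply or_congr_right
  constructor
  · rintro ⟨⟨x, hx⟩, -, hB⟩
    rw [Finset.mem_image] at hB
    obtain ⟨b, hb, rfl⟩ := hB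
    exact ⟨x, hx, b, hb, rfl⟩
  · rintro ⟨x, hx, b, hb, rfl⟩
    exact ⟨⟨x, hx⟩, Finset.mem_attach _ _, Finset.mem_image.2 ⟨b, hb, rfl⟩⟩

lemma image_up_subset_gap {x : Fin n} (b : Finset (Fin (gp B₀ x))) :
    b.image (up B₀ x) ⊆ Gap B₀ x := by
  intro y hy
  rw [Finset.mem_image] at hy
  obtain ⟨i, -, rfl⟩ := hy
  exact up_mem_Gap B₀ x i

lemma asm_mem_NC {z : Fin n} (hzB : z ∈ B₀) (hzmin : ∀ w : Fin n, z ≤ w)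
    {g : ∀ x ∈ B₀, Finset (Finset (Fin (gp B₀ x)))}
    (hg : ∀ x (hx : x ∈ B₀), g x hx ∈ NCPartitions (gp B₀ x)) :
    asm B₀ g ∈ NCPartitions n := by
  -- blocks other than B₀ are nonempty subsets of gaps
  have hblk : ∀ B ∈ asm B₀ g, B ≠ B₀ → ∃ x ∈ B₀, B ⊆ Gap B₀ x ∧ B.Nonempty := by
    intro B hB hne
    rcases mem_asm.1 hB with rfl | ⟨x, hx, b, hb, rfl⟩
    · exact absurd rfl hne
    · refine ⟨x, hx, image_up_subset_gap b, ?_⟩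
      exact Finset.Nonempty.image ((mem_NCPartitions.1 (hg x hx)).1 b hb) _
  rw [mem_NCPartitions]
  refine ⟨?_, ?_, ?_⟩
  · -- nonempty
    intro B hB
    by_cases hne : B = B₀
    · exact hne ▸ ⟨z, hzB⟩
    · exact (hblk B hB hne).choose_spec.2.2
  · -- exists unique block
    intro w
    by_cases hw : w ∈ B₀
    · refine ⟨B₀, ⟨Finset.mem_insert_self _ _, hw⟩, ?_⟩
      rintro B ⟨hB, hwB⟩
      by_contra hne
      obtain ⟨x, -, hsub, -⟩ := hblk B hB hne
      exact not_mem_of_mem_Gap (hsub hwB) hw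
    · have hzw : z < w := lt_of_le_of_ne (hzmin w) (fun h => hw (h ▸ hzB))
      obtain ⟨x, hx, hwgap⟩ := mem_Gap_of_not_mem hw ⟨z, hzB, hzw⟩
      obtain ⟨i, rfl⟩ := exists_up hwgap
      obtain ⟨b, ⟨hb, hib⟩, hbu⟩ := (mem_NCPartitions.1 (hg x hx)).2.1 i
      refine ⟨b.image (up B₀ x), ⟨mem_asm.2 (Or.inr ⟨x, hx, b, hb, rfl⟩),
        Finset.mem_image_of_mem _ hib⟩, ?_⟩
      rintro B ⟨hB, hwB⟩
      have hne : B ≠ B₀ := fun h => hw (h ▸ hwB)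
      rcases mem_asm.1 hB with h | ⟨x', hx', b', hb', rfl⟩
      · exact absurd h hne
      · have hgap' : up B₀ x i ∈ Gap B₀ x' := image_up_subset_gap b' hwB
        have hxx' : x' = x := Gap_unique hx' hx hgap' hwgap
        subst hxx'
        have hib' : i ∈ b' := by
          rw [Finset.mem_image] at hwB
          obtain ⟨j, hj, hji⟩ := hwB
          rwa [up_injective _ _ hji] at hj
        rw [hbu b' ⟨hb', hib'⟩]
  · -- non-crossing
    rintro ⟨p₁, q₁, p₂, q₂, h12, h23, h34, ⟨Bp, hBp, hp1, hp2⟩, ⟨Bq, hBq, hq1, hq2⟩, hno⟩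
    by_cases hBpe : Bp = B₀ <;> by_cases hBqe : Bq = B₀
    · exact hno ⟨B₀, hBpe ▸ hBp, hBqe ▸ hq1, hBpe ▸ hp2⟩
    · obtain ⟨x, hx, hsub, -⟩ := hblk Bq hBq hBqe
      have : p₂ ∈ Gap B₀ x :=
        mem_Gap_of_between (hsub hq1) (hsub hq2) (le_of_lt h23) (le_of_lt h34)
      exact not_mem_of_mem_Gap this (hBpe ▸ hp2)
    · obtain ⟨x, hx, hsub, -⟩ := hblk Bp hBp hBpe
      have : q₁ ∈ Gap B₀ x :=
        mem_Gap_of_between (hsub hp1) (hsub hp2) (le_of_lt h12) (le_of_lt h23)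
      exact not_mem_of_mem_Gap this (hBqe ▸ hq1)
    · rcases mem_asm.1 hBp with h | ⟨x, hx, b, hb, rfl⟩
      · exact absurd h hBpe
      rcases mem_asm.1 hBq with h | ⟨x', hx', b', hb', rfl⟩
      · exact absurd h hBqe
      have hsub := image_up_subset_gap (B₀ := B₀) (x := x) b
      have hsub' := image_up_subset_gap (B₀ := B₀) (x := x') b'
      have hq1gap : q₁ ∈ Gap B₀ x :=
        mem_Gap_of_between (hsub hp1) (hsub hp2) (le_of_lt h12) (le_of_lt h23)
      have hxx' : x = x' := (Gap_unique hx' hx (hsub' hq1) hq1gap).symm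
      subst hxx'
      obtain ⟨i₁, hi₁, rfl⟩ := Finset.mem_image.1 hp1
      obtain ⟨j₁, hj₁, rfl⟩ := Finset.mem_image.1 hq1
      obtain ⟨i₂m, hi₂, hp2e⟩ := Finset.mem_image.1 hp2
      obtain ⟨j₂m, hj₂, hq2e⟩ := Finset.mem_image.1 hq2
      subst hp2e; subst hq2e
      refine (mem_NCPartitions.1 (hg x hx)).2.2
        ⟨i₁, j₁, i₂m, j₂m, up_lt_up.1 h12, up_lt_up.1 h23, up_lt_up.1 h34,
         ⟨b, hb, hi₁, hi₂⟩, ⟨b', hb', hj₁, hj₂⟩, ?_⟩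
      rintro ⟨b'', hb'', hj₁'', hi₂''⟩
      exact hno ⟨b''.image (up B₀ x), mem_asm.2 (Or.inr ⟨x, hx, b'', hb'', rfl⟩),
        Finset.mem_image_of_mem _ hj₁'', Finset.mem_image_of_mem _ hi₂''⟩

lemma blkOf_asm {z : Fin n} (hzB : z ∈ B₀) (hzmin : ∀ w : Fin n, z ≤ w)
    {g : ∀ x ∈ B₀, Finset (Finset (Fin (gp B₀ x)))}
    (hg : ∀ x (hx : x ∈ B₀), g x hx ∈ NCPartitions (gp B₀ x)) :
    blkOf (asm B₀ g) z = B₀ :=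
  blkOf_eq (mem_NCPartitions.1 (asm_mem_NC hzB hzmin hg)).2.1
    (Finset.mem_insert_self _ _) hzB

lemma dis_asm {g : ∀ x ∈ B₀, Finset (Finset (Fin (gp B₀ x)))}
    (hg : ∀ x (hx : x ∈ B₀), g x hx ∈ NCPartitions (gp B₀ x)) :
    dis B₀ (asm B₀ g) = g := by
  funext x hx
  unfold dis
  have hfil : (asm B₀ g).filter (fun B => B ⊆ Gap B₀ x)
      = (g x hx).image (Finset.image (up B₀ x)) := by
    ext B
    rw [Finset.mem_filter, Finset.mem_image]
    constructor
    · rintro ⟨hB, hsub⟩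
      rcases mem_asm.1 hB with rfl | ⟨x', hx', b, hb, rfl⟩
      · exact absurd (hsub hx) (by rw [mem_Gap_iff]; simp)
      · have hne : (b.image (up B₀ x')).Nonempty :=
          Finset.Nonempty.image ((mem_NCPartitions.1 (hg x' hx')).1 b hb) _
        obtain ⟨y, hy⟩ := hne
        have : x = x' := Gap_unique hx hx' (hsub hy) (image_up_subset_gap b hy)
        subst this
        exact ⟨b, hb, rfl⟩
    · rintro ⟨b, hb, rfl⟩
      exact ⟨mem_asm.2 (Or.inr ⟨x, hx, b, hb, rfl⟩), image_up_subset_gap b⟩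
  rw [hfil, Finset.image_image]
  have : dn B₀ x ∘ Finset.image (up B₀ x) = id := by
    funext b
    exact dn_up
  rw [this, Finset.image_id]

lemma asm_dis {P : Finset (Finset (Fin n))} {z : Fin n} (hP : P ∈ NCPartitions n)
    (hblk : blkOf P z = B₀) (hzmin : ∀ w : Fin n, z ≤ w) :
    asm B₀ (dis B₀ P) = P := by
  obtain ⟨hP1, hP2, hP3⟩ := mem_NCPartitions.1 hP
  have hB₀P : B₀ ∈ P := hblk ▸ (blkOf_mem hP2 z).1
  have hzB : z ∈ B₀ := hblk ▸ (blkOf_mem hP2 z).2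
  ext B
  rw [mem_asm]
  constructor
  · rintro (rfl | ⟨x, hx, b, hb, rfl⟩)
    · exact hB₀P
    · unfold dis at hb
      rw [Finset.mem_image] at hb
      obtain ⟨B', hB', rfl⟩ := hb
      rw [Finset.mem_filter] at hB'
      rw [up_dn hB'.2]
      exact hB'.1
  · intro hBP
    by_cases hne : B = B₀
    · exact Or.inl hne
    · obtain ⟨x, hx, hsub⟩ := block_subset_gap hP hB₀P hBP hne hzB hzmin
      refine Or.inr ⟨x, hx, dn B₀ x B, ?_, (up_dn hsub).symm⟩
      unfold dis
      exact Finset.mem_image_of_mem _ (Finset.mem_filter.2 ⟨hBP, hsub⟩)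

lemma dis_mem_pi {P : Finset (Finset (Fin n))} {z : Fin n} (hP : P ∈ NCPartitions n)
    (hblk : blkOf P z = B₀) (hzmin : ∀ w : Fin n, z ≤ w)
    (x : Fin n) (hx : x ∈ B₀) : dis B₀ P x hx ∈ NCPartitions (gp B₀ x) := by
  obtain ⟨hP1, hP2, hP3⟩ := mem_NCPartitions.1 hP
  have hB₀P : B₀ ∈ P := hblk ▸ (blkOf_mem hP2 z).1
  have hzB : z ∈ B₀ := hblk ▸ (blkOf_mem hP2 z).2
  unfold dis
  rw [mem_NCPartitions]
  refine ⟨?_, ?_, ?_⟩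
  · intro b hb
    rw [Finset.mem_image] at hb
    obtain ⟨B, hB, rfl⟩ := hb
    rw [Finset.mem_filter] at hB
    obtain ⟨y, hy⟩ := hP1 B hB.1
    obtain ⟨i, hi⟩ := exists_up (hB.2 hy)
    exact ⟨i, mem_dn.2 (hi ▸ hy)⟩
  · intro i
    have hgap := up_mem_Gap B₀ x i
    have hBsub : blkOf P (up B₀ x i) ⊆ Gap B₀ x := blkOf_subset_gap hP hB₀P hzB hzmin hx hgap
    obtain ⟨hBmem, hiB⟩ := blkOf_mem hP2 (up B₀ x i)
    refine ⟨dn B₀ x (blkOf P (up B₀ x i)),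
      ⟨Finset.mem_image_of_mem _ (Finset.mem_filter.2 ⟨hBmem, hBsub⟩), mem_dn.2 hiB⟩, ?_⟩
    rintro b ⟨hb, hib⟩
    rw [Finset.mem_image] at hb
    obtain ⟨B', hB', rfl⟩ := hb
    rw [Finset.mem_filter] at hB'
    rw [blkOf_eq hP2 hB'.1 (mem_dn.1 hib)]
  · rintro ⟨i₁, j₁, i₂, j₂, h12, h23, h34, ⟨b, hb, hi₁, hi₂⟩, ⟨b', hb', hj₁, hj₂⟩, hno⟩
    rw [Finset.mem_image] at hb hb'
    obtain ⟨B, hB, rfl⟩ := hb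
    obtain ⟨B', hB', rfl⟩ := hb'
    rw [Finset.mem_filter] at hB hB'
    rw [mem_dn] at hi₁ hi₂ hj₁ hj₂
    refine hP3 ⟨up B₀ x i₁, up B₀ x j₁, up B₀ x i₂, up B₀ x j₂,
      up_lt_up.2 h12, up_lt_up.2 h23, up_lt_up.2 h34,
      ⟨B, hB.1, hi₁, hi₂⟩, ⟨B', hB'.1, hj₁, hj₂⟩, ?_⟩
    rintro ⟨B'', hB'', hq, hp⟩
    have hB''sub : B'' ⊆ Gap B₀ x := by
      have := blkOf_subset_gap hP hB₀P hzB hzmin hx (up_mem_Gap B₀ x j₁)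
      rwa [blkOf_eq hP2 hB'' hq] at this
    exact hno ⟨dn B₀ x B'',
      Finset.mem_image_of_mem _ (Finset.mem_filter.2 ⟨hB'', hB''sub⟩),
      mem_dn.2 hq, mem_dn.2 hp⟩

lemma prod_asm {z : Fin n} (hzB : z ∈ B₀) (hzmin : ∀ w : Fin n, z ≤ w)
    {g : ∀ x ∈ B₀, Finset (Finset (Fin (gp B₀ x)))}
    (hg : ∀ x (hx : x ∈ B₀), g x hx ∈ NCPartitions (gp B₀ x)) (c : ℕ → ℂ) :
    ∏ B ∈ asm B₀ g, c B.card
      = c B₀.card * ∏ x ∈ B₀.attach, ∏ b ∈ g x.1 x.2, c b.card := by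
  have hgapne : ∀ (x : Fin n) (hx : x ∈ B₀) (b : Finset (Fin (gp B₀ x))), b ∈ g x hx →
      (b.image (up B₀ x)).Nonempty := fun x hx b hb =>
    Finset.Nonempty.image ((mem_NCPartitions.1 (hg x hx)).1 b hb) _
  have hB₀nm : B₀ ∉ B₀.attach.biUnion
      (fun x => (g x.1 x.2).image (Finset.image (up B₀ x.1))) := by
    intro h
    rw [Finset.mem_biUnion] at h
    obtain ⟨⟨x, hx⟩, -, hmem⟩ := h
    rw [Finset.mem_image] at hmem
    obtain ⟨b, hb, hbe⟩ := hmem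
    obtain ⟨y, hy⟩ := hgapne x hx b hb
    have hyG : y ∈ Gap B₀ x := image_up_subset_gap b hy
    rw [hbe] at hy
    exact not_mem_of_mem_Gap hyG hy
  unfold asm
  rw [Finset.prod_insert hB₀nm]
  congr 1
  rw [Finset.prod_biUnion]
  · refine Finset.prod_congr rfl fun ⟨x, hx⟩ _ => ?_
    rw [Finset.prod_image]
    · exact Finset.prod_congr rfl fun b hb => by
        rw [Finset.card_image_of_injective _ (up_injective B₀ x)]
    · intro b hb b' hb' he
      exact Finset.image_injective (up_injective B₀ x) he
  · rintro ⟨x, hx⟩ - ⟨x', hx'⟩ - hne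
    refine Finset.disjoint_left.mpr ?_
    intro B hBx hBx'
    rw [Finset.mem_image] at hBx hBx'
    obtain ⟨b, hb, rfl⟩ := hBx
    obtain ⟨b', hb', he⟩ := hBx'
    obtain ⟨y, hy⟩ := hgapne x hx b hb
    have hxx' : x = x' :=
      Gap_unique hx hx' (image_up_subset_gap b hy)
        (image_up_subset_gap b' (he ▸ hy))
    exact hne (by simp [hxx'])

lemma fiber_sum (c : ℕ → ℂ) {B₀ : Finset (Fin n)} {z : Fin n} (hzB : z ∈ B₀)
    (hzmin : ∀ w : Fin n, z ≤ w) :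
    ∑ P ∈ (NCPartitions n).filter (fun P => blkOf P z = B₀), ∏ B ∈ P, c B.card
      = c B₀.card * ∏ x ∈ B₀, (∑ Q ∈ NCPartitions (gp B₀ x), ∏ b ∈ Q, c b.card) := by
  rw [Finset.prod_sum, Finset.mul_sum]
  refine Finset.sum_bij' (i := fun P _ => dis B₀ P) (j := fun g _ => asm B₀ g)
    ?_ ?_ ?_ ?_ ?_
  · intro P hP
    rw [Finset.mem_filter] at hP
    exact Finset.mem_pi.2 (dis_mem_pi hP.1 hP.2 hzmin)
  · intro g hg
    rw [Finset.mem_pi] at hg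
    exact Finset.mem_filter.2 ⟨asm_mem_NC hzB hzmin hg, blkOf_asm hzB hzmin hg⟩
  · intro P hP
    rw [Finset.mem_filter] at hP
    exact asm_dis hP.1 hP.2 hzmin
  · intro g hg
    rw [Finset.mem_pi] at hg
    exact dis_asm hg
  · intro P hP
    rw [Finset.mem_filter] at hP
    have hg : ∀ x (hx : x ∈ B₀), dis B₀ P x hx ∈ NCPartitions (gp B₀ x) :=
      dis_mem_pi hP.1 hP.2 hzmin
    calc ∏ B ∈ P, c B.card = ∏ B ∈ asm B₀ (dis B₀ P), c B.card := by
          rw [asm_dis hP.1 hP.2 hzmin]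
      _ = c B₀.card * ∏ x ∈ B₀.attach, ∏ b ∈ dis B₀ P x.1 x.2, c b.card :=
          prod_asm hzB hzmin hg c

end Bijection


section Step3

variable {n : ℕ}

/-- subsets of `Fin n` with minimum `t` and cardinality `k`. -/
def S0 (t : Fin n) (k : ℕ) : Finset (Finset (Fin n)) :=
  univ.filter fun B => t ∈ B ∧ (∀ y ∈ B, t ≤ y) ∧ B.card = k

lemma mem_S0 {t : Fin n} {k : ℕ} {B : Finset (Fin n)} :
    B ∈ S0 t k ↔ t ∈ B ∧ (∀ y ∈ B, t ≤ y) ∧ B.card = k := by simp [S0]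

/-- the weight of a subset: product of `m'` of the gap sizes. -/
def W (m' : ℕ → ℂ) (B : Finset (Fin n)) : ℂ := ∏ x ∈ B, m' (gp B x)

lemma S0_empty {t : Fin n} {k : ℕ} (h : n < t.val + k) : S0 t k = ∅ := by
  rw [Finset.eq_empty_iff_forall_notMem]
  intro B hB
  rw [mem_S0] at hB
  obtain ⟨htB, hmin, hcard⟩ := hB
  have hle : B.card ≤ n - t.val := by
    have := Finset.card_le_card_of_injOn (fun y : Fin n => y.val - t.val)
      (fun y hy => Finset.mem_range.2 (by
        show y.val - t.val < n - t.val
        have := hmin y hy; rw [Fin.le_def] at this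
        have := y.isLt; omega))
      (fun y₁ h₁ y₂ h₂ he => by
        have hl₁ := hmin y₁ h₁; have hl₂ := hmin y₂ h₂
        rw [Fin.le_def] at hl₁ hl₂
        exact Fin.ext (by simp at he; omega))
    simpa using this
  omega

lemma min'_congr {α : Type*} [LinearOrder α] {s t : Finset α} (h : s = t) (hs : s.Nonempty) :
    s.min' hs = t.min' (h ▸ hs) := by subst h; rfl

lemma nxt_congr {B B' : Finset (Fin n)} {x : Fin n}
    (h : B.filter (fun y => x < y) = B'.filter (fun y => x < y)) : nxt B x = nxt B' x := by
  unfold nxt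
  rw [h]

lemma claimC (m' : ℕ → ℂ) : ∀ k, 1 ≤ k → ∀ (t : Fin n) (j : ℕ), t.val + k + j = n →
    ∑ B ∈ S0 t k, W m' B = PowerSeries.coeff j ((PowerSeries.mk m') ^ k) := by
  intro k hk
  induction k, hk using Nat.le_induction with
  | base =>
    intro t j hj
    have hS : S0 t 1 = {{t}} := by
      ext B
      rw [mem_S0, Finset.mem_singleton]
      constructor
      · rintro ⟨htB, -, hcard⟩
        obtain ⟨a, rfl⟩ := Finset.card_eq_one.1 hcard
        rw [Finset.mem_singleton] at htB
        rw [htB]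
      · rintro rfl
        exact ⟨Finset.mem_singleton_self t, fun y hy => le_of_eq (Finset.mem_singleton.1 hy).symm,
          Finset.card_singleton t⟩
    rw [hS, Finset.sum_singleton]
    have hgp : gp {t} t = j := by
      have hfil : ({t} : Finset (Fin n)).filter (fun y => t < y) = ∅ := by
        rw [Finset.eq_empty_iff_forall_notMem]
        intro y hy
        rw [Finset.mem_filter, Finset.mem_singleton] at hy
        exact absurd hy.2 (hy.1 ▸ lt_irrefl t)
      have hnxt : nxt {t} t = n := by
        unfold nxt
        rw [dif_neg (by rw [hfil]; exact Finset.not_nonempty_empty)]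
      unfold gp
      omega
    rw [W, Finset.prod_singleton, hgp, pow_one, PowerSeries.coeff_mk]
  | succ k hk ih =>
    intro t j hj
    have key : ∀ {B : Finset (Fin n)}, B ∈ S0 t (k+1) → (B.erase t).Nonempty := by
      intro B hB
      rw [mem_S0] at hB
      rw [← Finset.card_pos, Finset.card_erase_of_mem hB.1, hB.2.2]
      omega
    -- split off the minimum
    have hsplit : ∑ B ∈ S0 t (k+1), W m' B
        = ∑ p ∈ (univ.filter fun y : Fin n => t < y).sigma (fun t' => S0 t' k),
            m' (p.1.val - t.val - 1) * W m' p.2 := by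
      refine Finset.sum_bij' (i := fun B hB => ⟨(B.erase t).min' (key hB), B.erase t⟩)
        (j := fun p _ => insert t p.2) ?_ ?_ ?_ ?_ ?_
      · intro B hB
        have hne := key hB
        rw [mem_S0] at hB
        obtain ⟨htB, hmin, hcard⟩ := hB
        have ht'm := Finset.min'_mem (B.erase t) hne
        rw [Finset.mem_sigma]
        constructor
        · rw [Finset.mem_filter]
          refine ⟨Finset.mem_univ _, ?_⟩
          rw [Finset.mem_erase] at ht'm
          exact lt_of_le_of_ne (hmin _ ht'm.2) (Ne.symm ht'm.1)
        · rw [mem_S0]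
          refine ⟨ht'm, fun y hy => Finset.min'_le _ _ hy, ?_⟩
          rw [Finset.card_erase_of_mem htB, hcard]
          omega
      · rintro ⟨t', B'⟩ hp
        rw [Finset.mem_sigma, Finset.mem_filter] at hp
        obtain ⟨⟨-, htt'⟩, hB'⟩ := hp
        rw [mem_S0] at hB'
        obtain ⟨ht'B', hmin', hcard'⟩ := hB'
        have htnB' : t ∉ B' := fun h => absurd (lt_of_lt_of_le htt' (hmin' t h)) (lt_irrefl t)
        rw [mem_S0]
        refine ⟨Finset.mem_insert_self _ _, ?_, ?_⟩
        · intro y hy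
          rcases Finset.mem_insert.1 hy with rfl | hy'
          · exact le_refl y
          · exact le_of_lt (lt_of_lt_of_le htt' (hmin' y hy'))
        · rw [Finset.card_insert_of_notMem htnB', hcard']
      · intro B hB
        rw [mem_S0] at hB
        exact Finset.insert_erase hB.1
      · rintro ⟨t', B'⟩ hp
        rw [Finset.mem_sigma, Finset.mem_filter] at hp
        obtain ⟨⟨-, htt'⟩, hB'⟩ := hp
        rw [mem_S0] at hB'
        obtain ⟨ht'B', hmin', hcard'⟩ := hB'
        have htnB' : t ∉ B' := fun h => absurd (lt_of_lt_of_le htt' (hmin' t h)) (lt_irrefl t)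
        have he : (insert t B').erase t = B' := Finset.erase_insert htnB'
        suffices h : ∀ hne' : ((insert t B').erase t).Nonempty,
            (⟨((insert t B').erase t).min' hne', (insert t B').erase t⟩ :
              (_ : Fin n) × Finset (Fin n)) = ⟨t', B'⟩ by exact h _
        intro hne'
        refine Sigma.ext ?_ (heq_of_eq he)
        show ((insert t B').erase t).min' hne' = t'
        rw [min'_congr he]
        exact le_antisymm (Finset.min'_le _ _ ht'B') (Finset.le_min' _ _ _ hmin')
      · intro B hB
        have hne := key hB
        rw [mem_S0] at hB
        obtain ⟨htB, hmin, hcard⟩ := hB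
        have ht'm := Finset.min'_mem (B.erase t) hne
        rw [Finset.mem_erase] at ht'm
        have htt' : t < (B.erase t).min' hne :=
          lt_of_le_of_ne (hmin _ ht'm.2) (Ne.symm ht'm.1)
        have hfil : B.filter (fun y => t < y) = B.erase t := by
          ext y
          rw [Finset.mem_filter, Finset.mem_erase]
          constructor
          · rintro ⟨hyB, hty⟩; exact ⟨ne_of_gt hty, hyB⟩
          · rintro ⟨hyt, hyB⟩; exact ⟨hyB, lt_of_le_of_ne (hmin y hyB) (Ne.symm hyt)⟩
        have hnxtt : nxt B t = ((B.erase t).min' hne).val := by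
          have hne2 : (B.filter fun y => t < y).Nonempty := by rw [hfil]; exact hne
          unfold nxt
          rw [dif_pos hne2, min'_congr hfil]
        have hgpt : gp B t = ((B.erase t).min' hne).val - t.val - 1 := by
          unfold gp
          omega
        have hgpx : ∀ x ∈ B.erase t, gp B x = gp (B.erase t) x := by
          intro x hx
          rw [Finset.mem_erase] at hx
          have htx : t < x := lt_of_le_of_ne (hmin x hx.2) (Ne.symm hx.1)
          have : B.filter (fun y => x < y) = (B.erase t).filter (fun y => x < y) := by
            ext y
            rw [Finset.mem_filter, Finset.mem_filter, Finset.mem_erase]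
            constructor
            · rintro ⟨hyB, hxy⟩
              exact ⟨⟨ne_of_gt (lt_trans htx hxy), hyB⟩, hxy⟩
            · rintro ⟨⟨-, hyB⟩, hxy⟩; exact ⟨hyB, hxy⟩
          unfold gp
          rw [nxt_congr this]
        calc W m' B = ∏ x ∈ insert t (B.erase t), m' (gp B x) := by
              rw [Finset.insert_erase htB, W]
          _ = m' (gp B t) * ∏ x ∈ B.erase t, m' (gp B x) :=
              Finset.prod_insert (Finset.notMem_erase t B)
          _ = m' (((B.erase t).min' hne).val - t.val - 1) * W m' (B.erase t) := by
              rw [hgpt]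
              congr 1
              exact Finset.prod_congr rfl fun x hx => by rw [hgpx x hx]
    rw [hsplit, Finset.sum_sigma]
    have hstep : ∀ t' ∈ univ.filter (fun y : Fin n => t < y),
        ∑ B' ∈ S0 t' k, m' (t'.val - t.val - 1) * W m' B'
          = m' (t'.val - t.val - 1) * ∑ B' ∈ S0 t' k, W m' B' := fun t' _ =>
      (Finset.mul_sum _ _ _).symm
    rw [Finset.sum_congr rfl hstep]
    -- reindex over the natural number a = t' - t - 1
    set T : ℕ → ℂ := fun a => if h : t.val + 1 + a < n
      then ∑ B' ∈ S0 (⟨t.val + 1 + a, h⟩ : Fin n) k, W m' B' else 0 with hT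
    have hre : ∑ t' ∈ univ.filter (fun y : Fin n => t < y),
        m' (t'.val - t.val - 1) * (∑ B' ∈ S0 t' k, W m' B')
          = ∑ a ∈ range (k + j), m' a * T a := by
      refine Finset.sum_bij' (i := fun t' _ => t'.val - t.val - 1)
        (j := fun a ha => (⟨t.val + 1 + a, by rw [Finset.mem_range] at ha; omega⟩ : Fin n))
        ?_ ?_ ?_ ?_ ?_
      · intro t' ht'
        rw [Finset.mem_filter] at ht'
        have := ht'.2
        rw [Fin.lt_def] at this
        have := t'.isLt
        show t'.val - t.val - 1 ∈ Finset.range (k + j)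
        rw [Finset.mem_range]
        omega
      · intro a ha
        rw [Finset.mem_filter]
        refine ⟨Finset.mem_univ _, ?_⟩
        rw [Fin.lt_def]
        show t.val < t.val + 1 + a
        omega
      · intro t' ht'
        rw [Finset.mem_filter] at ht'
        have := ht'.2
        rw [Fin.lt_def] at this
        refine Fin.ext ?_
        show t.val + 1 + (t'.val - t.val - 1) = t'.val
        omega
      · intro a ha
        show t.val + 1 + a - t.val - 1 = a
        omega
      · intro t' ht'
        rw [Finset.mem_filter] at ht'
        have htlt := ht'.2
        rw [Fin.lt_def] at htlt
        have hcond : t.val + 1 + (t'.val - t.val - 1) < n := by have := t'.isLt; omega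
        have hTe : T (t'.val - t.val - 1) = ∑ B' ∈ S0 t' k, W m' B' := by
          simp only [hT]
          rw [dif_pos hcond]
          have he : (⟨t.val + 1 + (t'.val - t.val - 1), hcond⟩ : Fin n) = t' :=
            Fin.ext (by show t.val + 1 + (t'.val - t.val - 1) = t'.val; omega)
          rw [he]
        show m' (t'.val - t.val - 1) * (∑ B' ∈ S0 t' k, W m' B')
            = m' (t'.val - t.val - 1) * T (t'.val - t.val - 1)
        rw [hTe]
    rw [hre]
    have hTval : ∀ a ∈ range (j + 1),
        m' a * T a = m' a * PowerSeries.coeff (j - a) ((PowerSeries.mk m') ^ k) := by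
      intro a ha
      rw [Finset.mem_range] at ha
      have hcond : t.val + 1 + a < n := by omega
      simp only [hT]
      rw [dif_pos hcond, ih ⟨t.val + 1 + a, hcond⟩ (j - a)
        (by show t.val + 1 + a + k + (j - a) = n; omega)]
    have hTzero : ∀ a ∈ range (k + j), a ∉ range (j + 1) → m' a * T a = 0 := by
      intro a ha ha'
      rw [Finset.mem_range] at ha
      rw [Finset.mem_range] at ha'
      have hcond : t.val + 1 + a < n := by omega
      simp only [hT]
      rw [dif_pos hcond, S0_empty (by show n < t.val + 1 + a + k; omega),
        Finset.sum_empty, mul_zero]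
    rw [← Finset.sum_subset (Finset.range_subset_range.2 (by omega)) hTzero,
      Finset.sum_congr rfl hTval]
    have hpow : (PowerSeries.mk m') ^ (k + 1) = PowerSeries.mk m' * (PowerSeries.mk m') ^ k := by
      rw [pow_succ, mul_comm]
    rw [hpow, PowerSeries.coeff_mul, Finset.Nat.sum_antidiagonal_eq_sum_range_succ_mk]
    exact Finset.sum_congr rfl fun a ha => by rw [PowerSeries.coeff_mk]

end Step3

section Main

lemma NC_sum_eq (m c : ℕ → ℂ)
    (hmc : ∀ n, 1 ≤ n → m n = ∑ P ∈ NCPartitions n, ∏ B ∈ P, c B.card)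
    (g : ℕ) : (∑ Q ∈ NCPartitions g, ∏ b ∈ Q, c b.card) = if g = 0 then 1 else m g := by
  rcases Nat.eq_zero_or_pos g with rfl | hg
  · rw [NCPartitions_zero]; simp
  · rw [if_neg (by omega), hmc g hg]

lemma hrec_lemma (m c : ℕ → ℂ)
    (hmc : ∀ n, 1 ≤ n → m n = ∑ P ∈ NCPartitions n, ∏ B ∈ P, c B.card) :
    (PowerSeries.mk fun i => if i = 0 then 0 else m i)
      = pscomp (PowerSeries.mk fun i => if i = 0 then 0 else c i)
          (X * (1 + PowerSeries.mk fun i => if i = 0 then 0 else m i)) := by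
  set m' : ℕ → ℂ := fun i => if i = 0 then 1 else m i with hm'
  have hu : (1 + PowerSeries.mk fun i => if i = 0 then 0 else m i) = PowerSeries.mk m' := by
    ext i
    rw [map_add, PowerSeries.coeff_one, PowerSeries.coeff_mk, PowerSeries.coeff_mk, hm']
    by_cases h : i = 0 <;> simp [h]
  rw [hu]
  ext N
  rw [PowerSeries.coeff_mk, coeff_pscomp]
  have hXk : ∀ k ∈ range (N+1),
      PowerSeries.coeff k (PowerSeries.mk fun i => if i = 0 then 0 else c i)
          * PowerSeries.coeff N ((X * PowerSeries.mk m')^k)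
        = (if k = 0 then 0 else c k)
            * PowerSeries.coeff (N - k) ((PowerSeries.mk m')^k) := by
    intro k hk
    rw [Finset.mem_range] at hk
    rw [PowerSeries.coeff_mk, mul_pow, PowerSeries.coeff_X_pow_mul',
      if_pos (show k ≤ N by omega)]
  rw [Finset.sum_congr rfl hXk]
  rcases Nat.eq_zero_or_pos N with rfl | hN
  · simp
  have hz : (0:ℕ) < N := hN
  set z : Fin N := ⟨0, hz⟩ with hzdef
  have hzmin : ∀ w : Fin N, z ≤ w := fun w => by rw [Fin.le_def]; exact Nat.zero_le _
  rw [if_neg (by omega), hmc N hN]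
  have h1 : ∑ P ∈ NCPartitions N, ∏ B ∈ P, c B.card
      = ∑ B₀ ∈ univ.filter (fun B : Finset (Fin N) => z ∈ B),
          ∑ P ∈ (NCPartitions N).filter (fun P => blkOf P z = B₀), ∏ B ∈ P, c B.card := by
    refine (Finset.sum_fiberwise_of_maps_to ?_ _).symm
    intro P hP
    rw [Finset.mem_filter]
    exact ⟨mem_univ _, (blkOf_mem (mem_NCPartitions.1 hP).2.1 z).2⟩
  rw [h1]
  have h2 : ∀ B₀ ∈ univ.filter (fun B : Finset (Fin N) => z ∈ B),
      ∑ P ∈ (NCPartitions N).filter (fun P => blkOf P z = B₀), ∏ B ∈ P, c B.card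
        = c B₀.card * W m' B₀ := by
    intro B₀ hB₀
    rw [Finset.mem_filter] at hB₀
    rw [fiber_sum c hB₀.2 hzmin]
    congr 1
    rw [W]
    refine Finset.prod_congr rfl fun x hx => ?_
    rw [NC_sum_eq m c hmc (gp B₀ x)]
  rw [Finset.sum_congr rfl h2]
  have h3 : ∑ B₀ ∈ univ.filter (fun B : Finset (Fin N) => z ∈ B), c B₀.card * W m' B₀
      = ∑ k ∈ Finset.Icc 1 N, ∑ B₀ ∈ (univ.filter (fun B : Finset (Fin N) => z ∈ B)).filter
          (fun B => B.card = k), c B₀.card * W m' B₀ := by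
    refine (Finset.sum_fiberwise_of_maps_to ?_ _).symm
    intro B hB
    rw [Finset.mem_filter] at hB
    rw [Finset.mem_Icc]
    constructor
    · exact Finset.card_pos.2 ⟨z, hB.2⟩
    · calc B.card ≤ (univ : Finset (Fin N)).card := Finset.card_le_univ B
        _ = N := by rw [Finset.card_univ, Fintype.card_fin]
  rw [h3]
  have h4 : ∀ k ∈ Finset.Icc 1 N,
      ∑ B₀ ∈ (univ.filter (fun B : Finset (Fin N) => z ∈ B)).filter (fun B => B.card = k),
          c B₀.card * W m' B₀
        = (if k = 0 then 0 else c k) * PowerSeries.coeff (N - k) ((PowerSeries.mk m')^k) := by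
    intro k hk
    rw [Finset.mem_Icc] at hk
    have hSet : (univ.filter (fun B : Finset (Fin N) => z ∈ B)).filter (fun B => B.card = k)
        = S0 z k := by
      ext B
      rw [Finset.mem_filter, Finset.mem_filter, mem_S0]
      constructor
      · rintro ⟨⟨-, hzB⟩, hcard⟩
        exact ⟨hzB, fun y hy => hzmin y, hcard⟩
      · rintro ⟨hzB, -, hcard⟩
        exact ⟨⟨mem_univ _, hzB⟩, hcard⟩
    rw [hSet, if_neg (by omega)]
    have hcc : ∀ B ∈ S0 z k, c B.card * W m' B = c k * W m' B := by
      intro B hB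
      rw [(mem_S0.1 hB).2.2]
    rw [Finset.sum_congr rfl hcc, ← Finset.mul_sum,
      claimC m' k hk.1 z (N - k) (by show 0 + k + (N-k) = N; omega)]
  rw [Finset.sum_congr rfl h4]
  rw [show range (N+1) = insert 0 (Finset.Icc 1 N) from by
    ext a
    rw [Finset.mem_range, Finset.mem_insert, Finset.mem_Icc]
    omega]
  rw [Finset.sum_insert (by simp)]
  simp

end Main

end SProof

/-- For a distribution with moments `mₙ` (`m₁ ≠ 0`) and free cumulants `cₙ` (related by
the moment-cumulant formula over non-crossing partitions), the `S`-transform computed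
from moments, `((1+z)/z)·M⁻¹(z)`, equals the one computed from cumulants, `R⁻¹(z)/z`;
clearing the factor `z`, this says `(1 + z)·M⁻¹(z) = R⁻¹(z)` where `M⁻¹`, `R⁻¹` are the
compositional inverses of the moment series and the cumulant series. -/
theorem s_transform_moments_eq_cumulants (m c : ℕ → ℂ) (hm : m 1 ≠ 0)
    (hmc : ∀ n, 1 ≤ n → m n = ∑ P ∈ NCPartitions n, ∏ B ∈ P, c B.card)
    (MInv RInv : PowerSeries ℂ)
    (hM0 : PowerSeries.constantCoeff MInv = 0)
    (hR0 : PowerSeries.constantCoeff RInv = 0)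
    (hM1 : pscomp (PowerSeries.mk fun n => if n = 0 then 0 else m n) MInv = PowerSeries.X)
    (hM2 : pscomp MInv (PowerSeries.mk fun n => if n = 0 then 0 else m n) = PowerSeries.X)
    (hR1 : pscomp (PowerSeries.mk fun n => if n = 0 then 0 else c n) RInv = PowerSeries.X)
    (hR2 : pscomp RInv (PowerSeries.mk fun n => if n = 0 then 0 else c n) = PowerSeries.X) :
    (1 + PowerSeries.X) * MInv = RInv := by
  open PowerSeries SProof in
  set Mser : PowerSeries ℂ := PowerSeries.mk fun i => if i = 0 then 0 else m i with hMserdef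
  set Rser : PowerSeries ℂ := PowerSeries.mk fun i => if i = 0 then 0 else c i with hRserdef
  have hrec := SProof.hrec_lemma m c hmc
  rw [← hMserdef, ← hRserdef] at hrec
  set A : PowerSeries ℂ := PowerSeries.X * (1 + Mser) with hAdef
  have hRs : PowerSeries.constantCoeff Rser = 0 := by
    rw [hRserdef, ← PowerSeries.coeff_zero_eq_constantCoeff_apply, PowerSeries.coeff_mk]
    simp
  have hA0 : PowerSeries.constantCoeff A = 0 := by
    rw [hAdef, map_mul, PowerSeries.constantCoeff_X, zero_mul]
  have h1 : pscomp A MInv = MInv * (1 + PowerSeries.X) := by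
    rw [hAdef, SProof.pscomp_mul hM0, SProof.pscomp_X_left hM0, SProof.pscomp_add,
      SProof.pscomp_one, hM1]
  have hAM0 : PowerSeries.constantCoeff (pscomp A MInv) = 0 := by
    rw [SProof.constantCoeff_pscomp, hA0]
  have hfin : RInv = MInv * (1 + PowerSeries.X) := by
    calc RInv = pscomp RInv PowerSeries.X := (SProof.pscomp_X_right RInv).symm
      _ = pscomp RInv (pscomp Mser MInv) := by rw [hM1]
      _ = pscomp RInv (pscomp (pscomp Rser A) MInv) := by rw [← hrec]
      _ = pscomp RInv (pscomp Rser (pscomp A MInv)) := by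
          rw [SProof.pscomp_assoc hA0 hM0]
      _ = pscomp (pscomp RInv Rser) (pscomp A MInv) :=
          (SProof.pscomp_assoc hRs hAM0 RInv).symm
      _ = pscomp PowerSeries.X (pscomp A MInv) := by rw [hR2]
      _ = pscomp A MInv := SProof.pscomp_X_left hAM0
      _ = MInv * (1 + PowerSeries.X) := h1
  rw [hfin, mul_comm]
end

section
/- Let l be an isometric left shift with l*l = 1, l*Ω = 0, and τ the vacuum state. For f ∈ ℂ[[z]] with f(0) ≠ 0 and a = (1+l)f(l*), the distribution μ_a of a with respect to τ satisfies τ(a) = f(0) ≠ 0 and S_{μ_a}(z) = 1/f(z). -/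
/-- Haagerup's canonical operator `a = (1 + l) f(l*)` on the full Fock space of a
one-dimensional Hilbert space, realized algebraically on the span of the basis vectors
`δ_k` (`k ∈ ℕ`): `l δ_k = δ_{k+1}`, `(l*)ⁿ δ_k = δ_{k-n}` for `n ≤ k` and `0` otherwise,
so `a δ_k = Σ_{n=0}^{k} f_n (δ_{k-n} + δ_{k-n+1})` where `f = Σ f_n zⁿ`. -/
noncomputable def bOp (f : PowerSeries ℂ) : (ℕ →₀ ℂ) →ₗ[ℂ] (ℕ →₀ ℂ) :=
  Finsupp.lsum ℂ fun k =>
    LinearMap.toSpanSingleton ℂ (ℕ →₀ ℂ)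
      (∑ n ∈ Finset.range (k + 1), PowerSeries.coeff n f •
        (Finsupp.single (k - n) (1 : ℂ) + Finsupp.single (k - n + 1) (1 : ℂ)))

namespace HaagerupAux

open PowerSeries Finset

noncomputable def e (f : PowerSeries ℂ) (i j : ℕ) : ℂ :=
  (if j ≤ i then coeff (i - j) f else 0) +
  (if 1 ≤ j ∧ j ≤ i + 1 then coeff (i + 1 - j) f else 0)

lemma bOp_apply_eq (f : PowerSeries ℂ) (v : ℕ →₀ ℂ) (N : ℕ) (hs : v.support ⊆ Finset.range N)
    (j : ℕ) : (bOp f v) j = ∑ i ∈ Finset.range N, v i * e f i j := by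
  rw [bOp, Finsupp.lsum_apply]
  rw [Finsupp.sum_of_support_subset v hs _ (by intro i _; simp)]
  rw [Finsupp.finset_sum_apply]
  refine Finset.sum_congr rfl fun i _ => ?_
  rw [LinearMap.toSpanSingleton_apply, Finsupp.smul_apply, smul_eq_mul]
  congr 1
  rw [Finsupp.finset_sum_apply]
  have : ∀ n, ((PowerSeries.coeff n f •
      (Finsupp.single (i - n) (1 : ℂ) + Finsupp.single (i - n + 1) (1 : ℂ))) j)
      = coeff n f * ((if i - n = j then (1:ℂ) else 0) + (if i - n + 1 = j then (1:ℂ) else 0)) := by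
    intro n
    rw [Finsupp.smul_apply, smul_eq_mul, Finsupp.add_apply, Finsupp.single_apply,
      Finsupp.single_apply]
  rw [Finset.sum_congr rfl fun n _ => this n]
  have split : ∑ n ∈ Finset.range (i+1), coeff n f *
      ((if i - n = j then (1:ℂ) else 0) + (if i - n + 1 = j then (1:ℂ) else 0))
      = (∑ n ∈ Finset.range (i+1), coeff n f * (if i - n = j then (1:ℂ) else 0))
      + (∑ n ∈ Finset.range (i+1), coeff n f * (if i - n + 1 = j then (1:ℂ) else 0)) := by
    rw [← Finset.sum_add_distrib]
    exact Finset.sum_congr rfl fun n _ => by ring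
  rw [split, e]
  congr 1
  · by_cases hj : j ≤ i
    · rw [if_pos hj, Finset.sum_eq_single (i - j)]
      · rw [if_pos (by omega), mul_one]
      · intro b hb hbne
        rw [Finset.mem_range] at hb
        rw [if_neg (by omega), mul_zero]
      · intro h
        exact absurd (Finset.mem_range.2 (by omega)) h
    · rw [if_neg hj]
      refine Finset.sum_eq_zero fun n hn => ?_
      rw [Finset.mem_range] at hn
      rw [if_neg (by omega), mul_zero]
  · by_cases hj : 1 ≤ j ∧ j ≤ i + 1
    · rw [if_pos hj, Finset.sum_eq_single (i + 1 - j)]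
      · rw [if_pos (by omega), mul_one]
      · intro b hb hbne
        rw [Finset.mem_range] at hb
        rw [if_neg (by omega), mul_zero]
      · intro h
        exact absurd (Finset.mem_range.2 (by omega)) h
    · rw [if_neg hj]
      refine Finset.sum_eq_zero fun n hn => ?_
      rw [Finset.mem_range] at hn
      rw [if_neg (by omega), mul_zero]

lemma e_zero (f : PowerSeries ℂ) (i j : ℕ) (h : i + 1 < j) : e f i j = 0 := by
  rw [e, if_neg (by omega), if_neg (by omega), add_zero]

noncomputable def A (f : PowerSeries ℂ) (k j : ℕ) : ℂ := ((bOp f ^ k) (Finsupp.single 0 1)) j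

lemma B_support (f : PowerSeries ℂ) :
    ∀ k, ((bOp f ^ k) (Finsupp.single 0 (1:ℂ)) : ℕ →₀ ℂ).support ⊆ range (k+1) := by
  intro k
  induction k with
  | zero =>
    rw [pow_zero, Module.End.one_apply]
    exact (Finsupp.support_single_subset).trans (by simp)
  | succ k ih =>
    have h1 : (bOp f ^ (k+1)) (Finsupp.single 0 (1:ℂ))
        = bOp f ((bOp f ^ k) (Finsupp.single 0 (1:ℂ))) := by
      rw [pow_succ', Module.End.mul_apply]
    rw [h1]
    intro j hj
    rw [Finsupp.mem_support_iff] at hj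
    rw [Finset.mem_range]
    by_contra hc
    push_neg at hc
    apply hj
    rw [bOp_apply_eq f _ (k+1) ih]
    refine Finset.sum_eq_zero fun i hi => ?_
    rw [Finset.mem_range] at hi
    rw [e_zero f i j (by omega), mul_zero]

lemma A_rec (f : PowerSeries ℂ) (k j N : ℕ) (hN : k + 1 ≤ N) :
    A f (k+1) j = ∑ i ∈ range N, A f k i * e f i j := by
  have h1 : (bOp f ^ (k+1)) (Finsupp.single 0 (1:ℂ))
      = bOp f ((bOp f ^ k) (Finsupp.single 0 (1:ℂ))) := by
    rw [pow_succ', Module.End.mul_apply]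
  rw [A, h1, bOp_apply_eq f _ N ((B_support f k).trans (Finset.range_subset_range.2 hN))]
  exact Finset.sum_congr rfl fun i _ => rfl

lemma A_zero (f : PowerSeries ℂ) (j : ℕ) : A f 0 j = if 0 = j then 1 else 0 := by
  rw [A, pow_zero, Module.End.one_apply, Finsupp.single_apply]

lemma pow_coeff_zero (p : PowerSeries ℂ) (hp : constantCoeff p = 0) {k n : ℕ} (h : n < k) :
    coeff n (p ^ k) = 0 := by
  have hdvd : (X : PowerSeries ℂ) ^ k ∣ p ^ k :=
    pow_dvd_pow_of_dvd (X_dvd_iff.mpr hp) k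
  exact X_pow_dvd_iff.mp hdvd n h

noncomputable def g (f : PowerSeries ℂ) : PowerSeries ℂ := X * ((1 + X) * f)⁻¹

lemma g_key (f : PowerSeries ℂ) (hf : constantCoeff f ≠ 0) : g f * ((1 + X) * f) = X := by
  rw [g, mul_assoc, PowerSeries.inv_mul_cancel _ (by simpa using hf), mul_one]

lemma g_const (f : PowerSeries ℂ) : constantCoeff (g f) = 0 := by
  rw [g]; simp

lemma g_pow_coeff (f : PowerSeries ℂ) {k n : ℕ} (h : n < k) : coeff n (g f ^ k) = 0 :=
  pow_coeff_zero _ (g_const f) h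

noncomputable def Ej (f : PowerSeries ℂ) (j : ℕ) : PowerSeries ℂ :=
  (X ^ j + if j = 0 then 0 else X ^ (j - 1)) * f

lemma e_eq (f : PowerSeries ℂ) (d j : ℕ) : e f d j = coeff d (Ej f j) := by
  rw [Ej, add_mul, map_add, coeff_X_pow_mul', e]
  congr 1
  by_cases hj : j = 0
  · subst hj
    rw [if_neg (by omega), if_pos rfl, zero_mul, map_zero]
  · rw [if_neg hj, coeff_X_pow_mul']
    by_cases hc : 1 ≤ j ∧ j ≤ d + 1
    · rw [if_pos hc, if_pos (by omega)]
      have hnat : d - (j - 1) = d + 1 - j := by omega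
      rw [hnat]
    · rw [if_neg hc]
      push_neg at hc
      have h2 : d + 1 < j := hc (by omega)
      rw [if_neg (by omega)]

lemma coeff_oneX_Ej (f : PowerSeries ℂ) (d j : ℕ) :
    coeff d ((1 + X) * Ej f j) = e f d j + (if d = 0 then 0 else e f (d-1) j) := by
  rw [add_mul, one_mul, map_add,
    show (X : PowerSeries ℂ) * Ej f j = X ^ 1 * Ej f j by rw [pow_one],
    coeff_X_pow_mul', e_eq]
  congr 1
  by_cases hd : d = 0
  · rw [if_neg (by omega), if_pos hd]
  · rw [if_pos (by omega), if_neg hd, e_eq]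

lemma keyW (f : PowerSeries ℂ) (hf : constantCoeff f ≠ 0) :
    ∀ m j, ∑ k ∈ range (m+1), A f k j * coeff m (g f ^ k)
      = (if m = j then (1:ℂ) else 0) + (if m = j+1 then 1 else 0) := by
  intro m
  induction m using Nat.strong_induction_on with
  | _ m IH =>
  intro j
  rw [Finset.sum_range_succ']
  have h0 : A f 0 j * coeff m (g f ^ 0)
      = (if 0 = j then (1:ℂ) else 0) * (if m = 0 then 1 else 0) := by
    rw [A_zero, pow_zero, coeff_one]
  have t1 : ∀ k ∈ range m, A f (k+1) j * coeff m (g f ^ (k+1))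
      = ∑ p ∈ antidiagonal m, coeff p.1 (g f) *
          (coeff p.2 (g f ^ k) * ∑ i ∈ range (m+1), A f k i * e f i j) := by
    intro k hk
    rw [Finset.mem_range] at hk
    rw [A_rec f k j (m+1) (by omega), pow_succ', coeff_mul, mul_comm, Finset.sum_mul]
    exact Finset.sum_congr rfl fun p _ => by ring
  rw [Finset.sum_congr rfl t1, Finset.sum_comm]
  have t2 : ∀ p ∈ antidiagonal m,
      ∑ k ∈ range m, coeff p.1 (g f) *
          (coeff p.2 (g f ^ k) * ∑ i ∈ range (m+1), A f k i * e f i j)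
      = coeff p.1 (g f) * coeff p.2 ((1 + X) * Ej f j) := by
    intro p hp
    rw [Finset.HasAntidiagonal.mem_antidiagonal] at hp
    rw [← Finset.mul_sum]
    by_cases hp1 : p.1 = 0
    · rw [hp1, coeff_zero_eq_constantCoeff, g_const, zero_mul, zero_mul]
    · congr 1
      have hp2 : p.2 < m := by omega
      have swap : ∑ k ∈ range m, coeff p.2 (g f ^ k) * ∑ i ∈ range (m+1), A f k i * e f i j
          = ∑ i ∈ range (m+1), (∑ k ∈ range m, A f k i * coeff p.2 (g f ^ k)) * e f i j := by
        calc ∑ k ∈ range m, coeff p.2 (g f ^ k) * ∑ i ∈ range (m+1), A f k i * e f i j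
            = ∑ k ∈ range m, ∑ i ∈ range (m+1),
                A f k i * coeff p.2 (g f ^ k) * e f i j := by
              refine Finset.sum_congr rfl fun k _ => ?_
              rw [Finset.mul_sum]
              exact Finset.sum_congr rfl fun i _ => by ring
          _ = ∑ i ∈ range (m+1), ∑ k ∈ range m,
                A f k i * coeff p.2 (g f ^ k) * e f i j := Finset.sum_comm
          _ = _ := by
              refine Finset.sum_congr rfl fun i _ => ?_
              rw [Finset.sum_mul]
      rw [swap]
      have trunc : ∀ i, ∑ k ∈ range m, A f k i * coeff p.2 (g f ^ k)
          = (if p.2 = i then (1:ℂ) else 0) + (if p.2 = i+1 then 1 else 0) := by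
        intro i
        have hsub : range (p.2 + 1) ⊆ range m := Finset.range_subset_range.2 (by omega)
        have hzero : ∀ k ∈ range m, k ∉ range (p.2 + 1) →
            A f k i * coeff p.2 (g f ^ k) = 0 := by
          intro k _ hk2
          rw [Finset.mem_range, not_lt] at hk2
          rw [g_pow_coeff f (by omega), mul_zero]
        rw [← Finset.sum_subset hsub hzero, IH p.2 hp2 i]
      rw [Finset.sum_congr rfl fun i _ => congrArg (· * e f i j) (trunc i)]
      have expand : ∑ i ∈ range (m+1),
          ((if p.2 = i then (1:ℂ) else 0) + (if p.2 = i+1 then 1 else 0)) * e f i j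
          = (∑ i ∈ range (m+1), if p.2 = i then e f i j else 0)
            + (∑ i ∈ range (m+1), if p.2 = i+1 then e f i j else 0) := by
        rw [← Finset.sum_add_distrib]
        refine Finset.sum_congr rfl fun i _ => ?_
        split_ifs <;> ring
      rw [expand, coeff_oneX_Ej]
      congr 1
      · rw [Finset.sum_ite_eq, if_pos (Finset.mem_range.2 (by omega))]
      · by_cases hq : p.2 = 0
        · rw [if_pos hq]
          refine Finset.sum_eq_zero fun i _ => ?_
          rw [if_neg (by omega)]
        · rw [if_neg hq, Finset.sum_eq_single (p.2 - 1)]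
          · rw [if_pos (by omega)]
          · intro b hb hbne
            rw [if_neg (by omega)]
          · intro h
            exact absurd (Finset.mem_range.2 (by omega)) h
  rw [Finset.sum_congr rfl t2, ← coeff_mul, h0]
  have hval : g f * ((1 + X) * Ej f j)
      = X ^ (j+1) + (if j = 0 then 0 else X ^ j) := by
    rw [Ej]
    have hr : g f * ((1 + X) * ((X ^ j + if j = 0 then 0 else X ^ (j - 1)) * f))
        = (g f * ((1 + X) * f)) * (X ^ j + if j = 0 then 0 else X ^ (j - 1)) := by ring
    rw [hr, g_key f hf, mul_add]
    congr 1
    · rw [← pow_succ']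
    · by_cases hj : j = 0
      · rw [if_pos hj, if_pos hj, mul_zero]
      · rw [if_neg hj, if_neg hj, ← pow_succ']
        have hnat : j - 1 + 1 = j := by omega
        rw [hnat]
  rw [hval, map_add, coeff_X_pow]
  by_cases hj : j = 0
  · subst hj
    rw [if_pos rfl, map_zero]
    split_ifs <;> first | ring1 | (exfalso; omega)
  · rw [if_neg hj, coeff_X_pow]
    split_ifs <;> first | ring1 | (exfalso; omega)

lemma coeff_pscomp (p r : PowerSeries ℂ) (n : ℕ) :
    coeff n (pscomp p r) = ∑ k ∈ range (n+1), coeff k p * coeff n (r^k) := by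
  rw [pscomp, coeff_mk]

lemma part1 (f : PowerSeries ℂ) : ((bOp f) (Finsupp.single 0 1)) 0 = constantCoeff f := by
  have h1 : ((bOp f) (Finsupp.single 0 1)) 0 = A f 1 0 := by rw [A, pow_one]
  rw [h1, A_rec f 0 0 1 le_rfl, Finset.sum_range_one, A_zero, e,
    if_pos rfl, one_mul, if_pos le_rfl, if_neg (by omega), add_zero,
    coeff_zero_eq_constantCoeff]

noncomputable def M (f : PowerSeries ℂ) : PowerSeries ℂ :=
  PowerSeries.mk fun k => if k = 0 then 0 else A f k 0

lemma M_const (f : PowerSeries ℂ) : constantCoeff (M f) = 0 := by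
  rw [← coeff_zero_eq_constantCoeff, M, coeff_mk, if_pos rfl]

lemma goal2 (f : PowerSeries ℂ) (hf : constantCoeff f ≠ 0) :
    pscomp (M f) (g f) = X := by
  ext n
  rw [coeff_pscomp, coeff_X]
  have h := keyW f hf n 0
  rw [Finset.sum_range_succ'] at h ⊢
  have hA00 : A f 0 0 * coeff n (g f ^ 0) = (if n = 0 then (1:ℂ) else 0) := by
    rw [A_zero, pow_zero, coeff_one, if_pos rfl, one_mul]
  rw [hA00] at h
  simp only [zero_add] at h
  have hterm : ∀ k ∈ range n,
      coeff (k+1) (M f) * coeff n (g f ^ (k+1))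
      = A f (k+1) 0 * coeff n (g f ^ (k+1)) := by
    intro k _
    rw [M, coeff_mk, if_neg (Nat.succ_ne_zero k)]
  rw [Finset.sum_congr rfl hterm, M, coeff_mk, if_pos rfl, zero_mul, add_zero]
  linear_combination h

lemma pscomp_one (r : PowerSeries ℂ) : pscomp 1 r = 1 := by
  ext n
  rw [coeff_pscomp, Finset.sum_eq_single 0]
  · rw [pow_zero, coeff_one, if_pos rfl, one_mul]
  · intro b _ hb
    rw [coeff_one, if_neg hb, zero_mul]
  · intro h
    exact absurd (Finset.mem_range.2 (by omega)) h

lemma pscomp_mul (u v r : PowerSeries ℂ) (hr : constantCoeff r = 0) :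
    pscomp (u * v) r = pscomp u r * pscomp v r := by
  ext n
  rw [coeff_pscomp, coeff_mul]
  have hL : ∀ k ∈ range (n+1), coeff k (u*v) * coeff n (r^k)
      = ∑ p ∈ antidiagonal k, coeff p.1 u * coeff p.2 v * coeff n (r^(p.1+p.2)) := by
    intro k _
    rw [coeff_mul, Finset.sum_mul]
    refine Finset.sum_congr rfl fun p hp => ?_
    rw [Finset.HasAntidiagonal.mem_antidiagonal] at hp
    rw [hp]
  rw [Finset.sum_congr rfl hL]
  have hdisj : (↑(Finset.range (n+1)) : Set ℕ).PairwiseDisjoint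
      (fun k => (Finset.HasAntidiagonal.antidiagonal k : Finset (ℕ × ℕ))) := by
    intro a _ b _ hab
    simp only [Function.onFun]
    rw [Finset.disjoint_left]
    intro p hpa hpb
    rw [Finset.HasAntidiagonal.mem_antidiagonal] at hpa hpb
    exact hab (hpa ▸ hpb)
  rw [← Finset.sum_biUnion hdisj]
  have hsub : (Finset.range (n+1)).biUnion (fun k => Finset.HasAntidiagonal.antidiagonal k)
      ⊆ Finset.range (n+1) ×ˢ Finset.range (n+1) := by
    intro p hp
    simp only [Finset.mem_biUnion, Finset.mem_range, Finset.HasAntidiagonal.mem_antidiagonal] at hp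
    obtain ⟨k, hk, hpk⟩ := hp
    rw [Finset.mem_product, Finset.mem_range, Finset.mem_range]
    omega
  have hvan : ∀ p ∈ Finset.range (n+1) ×ˢ Finset.range (n+1),
      p ∉ (Finset.range (n+1)).biUnion (fun k => Finset.HasAntidiagonal.antidiagonal k) →
      coeff p.1 u * coeff p.2 v * coeff n (r^(p.1+p.2)) = 0 := by
    intro p _ hp
    have hgt : n < p.1 + p.2 := by
      by_contra hc
      push_neg at hc
      exact hp (Finset.mem_biUnion.2 ⟨p.1 + p.2, Finset.mem_range.2 (by omega),
        Finset.HasAntidiagonal.mem_antidiagonal.2 rfl⟩)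
    rw [pow_coeff_zero r hr hgt, mul_zero]
  rw [Finset.sum_subset hsub hvan, Finset.sum_product]
  have hR : ∀ q ∈ antidiagonal n, coeff q.1 (pscomp u r) * coeff q.2 (pscomp v r)
      = ∑ a ∈ range (n+1), ∑ b ∈ range (n+1),
          (coeff a u * coeff q.1 (r^a)) * (coeff b v * coeff q.2 (r^b)) := by
    intro q hq
    rw [Finset.HasAntidiagonal.mem_antidiagonal] at hq
    rw [coeff_pscomp, coeff_pscomp]
    have e1 : ∑ a ∈ range (q.1+1), coeff a u * coeff q.1 (r^a)
        = ∑ a ∈ range (n+1), coeff a u * coeff q.1 (r^a) :=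
      Finset.sum_subset (Finset.range_subset_range.2 (by omega)) (fun a _ ha2 => by
        rw [Finset.mem_range, not_lt] at ha2
        rw [pow_coeff_zero r hr (by omega), mul_zero])
    have e2 : ∑ b ∈ range (q.2+1), coeff b v * coeff q.2 (r^b)
        = ∑ b ∈ range (n+1), coeff b v * coeff q.2 (r^b) :=
      Finset.sum_subset (Finset.range_subset_range.2 (by omega)) (fun b _ hb2 => by
        rw [Finset.mem_range, not_lt] at hb2
        rw [pow_coeff_zero r hr (by omega), mul_zero])
    rw [e1, e2, Finset.sum_mul_sum]
  rw [Finset.sum_congr rfl hR]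
  have hswap : ∑ q ∈ antidiagonal n, ∑ a ∈ range (n+1), ∑ b ∈ range (n+1),
        (coeff a u * coeff q.1 (r^a)) * (coeff b v * coeff q.2 (r^b))
      = ∑ a ∈ range (n+1), ∑ b ∈ range (n+1), ∑ q ∈ antidiagonal n,
        (coeff a u * coeff q.1 (r^a)) * (coeff b v * coeff q.2 (r^b)) := by
    rw [Finset.sum_comm]
    exact Finset.sum_congr rfl fun a _ => Finset.sum_comm
  rw [hswap]
  refine Finset.sum_congr rfl fun a _ => Finset.sum_congr rfl fun b _ => ?_
  have hq : ∑ q ∈ antidiagonal n,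
      (coeff a u * coeff q.1 (r^a)) * (coeff b v * coeff q.2 (r^b))
      = coeff a u * coeff b v *
        ∑ q ∈ antidiagonal n, coeff q.1 (r^a) * coeff q.2 (r^b) := by
    rw [Finset.mul_sum]
    exact Finset.sum_congr rfl fun q _ => by ring
  rw [hq, ← coeff_mul, ← pow_add]

lemma pscomp_pow (p r : PowerSeries ℂ) (hr : constantCoeff r = 0) (k : ℕ) :
    pscomp (p^k) r = (pscomp p r)^k := by
  induction k with
  | zero => rw [pow_zero, pow_zero, pscomp_one]
  | succ k ih => rw [pow_succ, pow_succ, pscomp_mul _ _ _ hr, ih]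

lemma goal3 (f : PowerSeries ℂ) (hf : constantCoeff f ≠ 0) :
    pscomp (g f) (M f) = X := by
  ext n
  set N := n + 2 with hN
  have hn : n < N := by omega
  have h1 : 1 < N := by omega
  set Bm : Matrix (Fin N) (Fin N) ℂ := fun i k => coeff (i:ℕ) (g f ^ (k:ℕ)) with hBm
  set Am : Matrix (Fin N) (Fin N) ℂ := fun k j => coeff (k:ℕ) (M f ^ (j:ℕ)) with hAm
  have hpowX : ∀ j : ℕ, pscomp (M f ^ j) (g f) = X ^ j := by
    intro j
    rw [pscomp_pow _ _ (g_const f), goal2 f hf]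
  have hBA : Bm * Am = 1 := by
    ext i j
    rw [Matrix.mul_apply, Matrix.one_apply]
    have hs : ∑ k : Fin N, Bm i k * Am k j
        = ∑ k ∈ range N, coeff (i:ℕ) (g f ^ k) * coeff k (M f ^ (j:ℕ)) :=
      Fin.sum_univ_eq_sum_range (fun k => coeff (i:ℕ) (g f ^ k) * coeff k (M f ^ (j:ℕ))) N
    rw [hs]
    have htr : ∑ k ∈ range ((i:ℕ)+1), coeff (i:ℕ) (g f ^ k) * coeff k (M f ^ (j:ℕ))
        = ∑ k ∈ range N, coeff (i:ℕ) (g f ^ k) * coeff k (M f ^ (j:ℕ)) :=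
      Finset.sum_subset (Finset.range_subset_range.2 (by omega)) (fun k _ hk2 => by
        rw [Finset.mem_range, not_lt] at hk2
        rw [g_pow_coeff f (by omega), zero_mul])
    rw [← htr]
    have := hpowX (j:ℕ)
    have hco : coeff (i:ℕ) (pscomp (M f ^ (j:ℕ)) (g f)) = coeff (i:ℕ) (X ^ (j:ℕ)) := by
      rw [this]
    rw [coeff_pscomp] at hco
    have hcomm : ∑ k ∈ range ((i:ℕ)+1), coeff (i:ℕ) (g f ^ k) * coeff k (M f ^ (j:ℕ))
        = ∑ k ∈ range ((i:ℕ)+1), coeff k (M f ^ (j:ℕ)) * coeff (i:ℕ) (g f ^ k) :=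
      Finset.sum_congr rfl fun k _ => mul_comm _ _
    rw [hcomm, hco, coeff_X_pow]
    by_cases hij : (i:ℕ) = (j:ℕ)
    · rw [if_pos hij, if_pos (Fin.ext hij)]
    · rw [if_neg hij, if_neg (fun hc => hij (by rw [hc]))]
  have hAB : Am * Bm = 1 := mul_eq_one_comm.mp hBA
  have h2 : (Am * Bm) ⟨n, hn⟩ ⟨1, h1⟩ = (1 : Matrix (Fin N) (Fin N) ℂ) ⟨n, hn⟩ ⟨1, h1⟩ := by
    rw [hAB]
  rw [Matrix.mul_apply, Matrix.one_apply] at h2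
  have hs : ∑ k : Fin N, Am ⟨n, hn⟩ k * Bm k ⟨1, h1⟩
      = ∑ k ∈ range N, coeff n (M f ^ k) * coeff k (g f ^ 1) :=
    Fin.sum_univ_eq_sum_range (fun k => coeff n (M f ^ k) * coeff k (g f ^ 1)) N
  rw [hs] at h2
  have htr : ∑ k ∈ range (n+1), coeff n (M f ^ k) * coeff k (g f ^ 1)
      = ∑ k ∈ range N, coeff n (M f ^ k) * coeff k (g f ^ 1) :=
    Finset.sum_subset (Finset.range_subset_range.2 (by omega)) (fun k _ hk2 => by
      rw [Finset.mem_range, not_lt] at hk2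
      rw [pow_coeff_zero (M f) (M_const f) (by omega), zero_mul])
  rw [← htr] at h2
  rw [coeff_pscomp, coeff_X]
  have hcomm : ∑ k ∈ range (n+1), coeff k (g f) * coeff n (M f ^ k)
      = ∑ k ∈ range (n+1), coeff n (M f ^ k) * coeff k (g f ^ 1) :=
    Finset.sum_congr rfl fun k _ => by rw [pow_one]; ring
  rw [hcomm, h2]
  by_cases hn1 : n = 1
  · rw [if_pos hn1, if_pos (by exact Fin.ext hn1)]
  · rw [if_neg hn1, if_neg (fun hc => hn1 (by
      have := congrArg Fin.val hc
      simpa using this))]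

end HaagerupAux

/-- For `a = (1+l)f(l*)` with `f(0) ≠ 0` and the vacuum state `τ(T) = ⟨T δ₀, δ₀⟩`, one
has `τ(a) = f(0) ≠ 0` and `S_{μ_a}(z) = 1/f(z)`: the moment series
`M(z) = Σ_{k≥1} τ(aᵏ) zᵏ` has compositional inverse `M⁻¹(z) = z·((1+z)f(z))⁻¹`, i.e.
`S_{μ_a}(z) = ((1+z)/z)·M⁻¹(z) = 1/f(z)`. -/
theorem bOp_s_transform (f : PowerSeries ℂ) (hf : PowerSeries.constantCoeff f ≠ 0) :
    ((bOp f) (Finsupp.single 0 1)) 0 = PowerSeries.constantCoeff f ∧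
    pscomp (PowerSeries.mk fun k => if k = 0 then 0
        else ((bOp f ^ k) (Finsupp.single 0 1)) 0)
      (PowerSeries.X * ((1 + PowerSeries.X) * f)⁻¹) = PowerSeries.X ∧
    pscomp (PowerSeries.X * ((1 + PowerSeries.X) * f)⁻¹)
      (PowerSeries.mk fun k => if k = 0 then 0
        else ((bOp f ^ k) (Finsupp.single 0 1)) 0) = PowerSeries.X := by
  exact ⟨HaagerupAux.part1 f, HaagerupAux.goal2 f hf, HaagerupAux.goal3 f hf⟩
end
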